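/- Reducing the likelihood-ratio event: Let Z ∼ Γ_− with n > 1, and suppose for some δ_1, δ_2 > 0: (i) P( N̂_+ > N̂_− | N̂_P, N̂_Q )·1{E_P ∩ E_Q} ≥ δ_1·1{E_P ∩ E_Q} almost surely, and (ii) P( ñ_+ > ñ_− ) ≥ δ_2. Then P( N̂_+ ≥ N̂_− and n̂_+ ≥ n̂_− ) ≥ δ_1·( δ_2 − P(E_P^c) − P(E_Q^c) ). -/

import Mathlib

open MeasureTheory Finset

noncomputable section

namespace Paper

universe u

section Basic

variable {X : Type u} [MeasurableSpace X]

/-- 0-1 risk of a classifier under a distribution on `X × Bool`. -/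
def risk (P : Measure (X × Bool)) (h : X → Bool) : ℝ :=
  (P {p | h p.1 ≠ p.2}).toReal

/-- Disagreement pseudo-distance `P(h ≠ h')` under the marginal. -/
def dis (P : Measure (X × Bool)) (h h' : X → Bool) : ℝ :=
  (P {p | h p.1 ≠ h' p.1}).toReal

/-- Excess risk over the best in class. -/
def excess (H : Set (X → Bool)) (P : Measure (X × Bool)) (h : X → Bool) : ℝ :=
  risk P h - ⨅ h' : H, risk P (h' : X → Bool)

/-- `h` is a risk minimizer in `H` for `P`. -/
def IsOpt (H : Set (X → Bool)) (P : Measure (X × Bool)) (h : X → Bool) : Prop :=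
  h ∈ H ∧ ∀ h' ∈ H, risk P h ≤ risk P h'

/-- Bernstein class condition with respect to a given minimizer. -/
def BernsteinAt (H : Set (X → Bool)) (P : Measure (X × Bool)) (hstar : X → Bool)
    (Cb β : ℝ) : Prop :=
  IsOpt H P hstar ∧ ∀ h ∈ H, dis P h hstar ≤ Cb * excess H P h ^ β

/-- Bernstein class condition with parameters `(Cb, β)`. -/
def Bernstein (H : Set (X → Bool)) (P : Measure (X × Bool)) (Cb β : ℝ) : Prop :=
  ∃ hstar, BernsteinAt H P hstar Cb β

/-- `P` has transfer exponent `(Cr, ρ)` with respect to `D`. -/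
def Transfer (H : Set (X → Bool)) (P D : Measure (X × Bool)) (Cr ρ : ℝ) : Prop :=
  ∀ h ∈ H, excess H D h ≤ Cr * excess H P h ^ (1 / ρ)

/-- `H` shatters the finite set `s`. -/
def Shatters (H : Set (X → Bool)) (s : Finset X) : Prop :=
  ∀ f : X → Bool, ∃ h ∈ H, ∀ x ∈ s, h x = f x

/-- VC dimension of `H` is at most `d`. -/
def VCLE (H : Set (X → Bool)) (d : ℕ) : Prop :=
  ∀ s : Finset X, Shatters H s → s.card ≤ d

/-- VC dimension of `H` is exactly `d`. -/
def VCEq (H : Set (X → Bool)) (d : ℕ) : Prop :=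
  VCLE H d ∧ ∃ s : Finset X, Shatters H s ∧ s.card = d

/-- The positive logarithm `log x = max (ln x) 1`. -/
def plog (x : ℝ) : ℝ := max (Real.log x) 1

/-- `ε(m, δ) = (d/m) log(m/d) + (1/m) log(1/δ)`. -/
def eps (d m : ℕ) (δ : ℝ) : ℝ :=
  ((d : ℝ) / m) * plog ((m : ℝ) / d) + (1 / m) * plog (1 / δ)

/-- Empirical risk on a sample of size `m`. -/
def empRisk {m : ℕ} (S : Fin m → X × Bool) (h : X → Bool) : ℝ :=
  (∑ i, if h (S i).1 ≠ (S i).2 then (1 : ℝ) else 0) / m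

/-- Excess empirical risk. -/
def empExcess {m : ℕ} (S : Fin m → X × Bool) (h h' : X → Bool) : ℝ :=
  empRisk S h - empRisk S h'

/-- Empirical disagreement pseudo-distance. -/
def empDis {m : ℕ} (S : Fin m → X × Bool) (h h' : X → Bool) : ℝ :=
  (∑ i, if h (S i).1 ≠ h' (S i).1 then (1 : ℝ) else 0) / m

/-- `h` is an empirical risk minimizer over `H` for the sample `S`. -/
def IsERM (H : Set (X → Bool)) {m : ℕ} (S : Fin m → X × Bool) (h : X → Bool) : Prop :=
  h ∈ H ∧ ∀ h' ∈ H, empRisk S h ≤ empRisk S h'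

end Basic

/-- The uniform Bernstein inequality (for VC classes and independent,
not necessarily identically distributed samples) holds with constant `C0`. -/
def UnifBernstein (C0 : ℝ) : Prop :=
  ∀ (Y : Type u) (_ : MeasurableSpace Y) (H : Set (Y → Bool)) (d : ℕ),
    VCEq H d →
    ∀ m : ℕ, 0 < m → ∀ δ : ℝ, 0 < δ → δ < 1 →
    ∀ μ : Fin m → Measure (Y × Bool), (∀ i, IsProbabilityMeasure (μ i)) →
    ENNReal.ofReal (1 - δ) ≤
      Measure.pi μ {S : Fin m → Y × Bool | ∀ h ∈ H, ∀ h' ∈ H,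
        ((∑ i, (risk (μ i) h - risk (μ i) h')) / m ≤
            empExcess S h h'
              + C0 * Real.sqrt
                  (min ((∑ i, dis (μ i) h h') / m) (empDis S h h') * eps d m δ)
              + C0 * eps d m δ)
        ∧ ((1 / 2) * ((∑ i, dis (μ i) h h') / m) - C0 * eps d m δ ≤ empDis S h h')
        ∧ (empDis S h h' ≤ 2 * ((∑ i, dis (μ i) h h') / m) + C0 * eps d m δ)}

section Multi

variable {X : Type u} [MeasurableSpace X] {N : ℕ}

/-- The multisample distribution `Π = ∏_t P_t^{n_t}`. -/
def msM (P : Fin (N + 1) → Measure (X × Bool)) (n : Fin (N + 1) → ℕ) :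
    Measure ((t : Fin (N + 1)) → Fin (n t) → X × Bool) :=
  Measure.pi fun t => Measure.pi fun _ => P t

/-- Membership in the multisource class `M(Cr, {ρ_t}, {n_t}, Cb, β)`:
(A1) a common optimal classifier, (A2) transfer exponents to the target
`D = P (Fin.last N)`, (A3) Bernstein class condition for every task. -/
def MemClass (H : Set (X → Bool)) (P : Fin (N + 1) → Measure (X × Bool))
    (Cr : ℝ) (ρ : Fin (N + 1) → ℝ) (Cb β : ℝ) : Prop :=
  (∀ t, IsProbabilityMeasure (P t)) ∧
  (∃ hstar ∈ H, ∀ t, IsOpt H (P t) hstar) ∧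
  (∀ t, Transfer H (P t) (P (Fin.last N)) Cr (ρ t)) ∧
  (∀ t, Bernstein H (P t) Cb β)

/-- Empirical risk over the aggregation of the datasets indexed by `T`. -/
def empRiskAgg {n : Fin (N + 1) → ℕ} (Z : (t : Fin (N + 1)) → Fin (n t) → X × Bool)
    (T : Finset (Fin (N + 1))) (h : X → Bool) : ℝ :=
  (∑ t ∈ T, ∑ i, if h (Z t i).1 ≠ (Z t i).2 then (1 : ℝ) else 0) / (∑ t ∈ T, (n t : ℝ))

/-- Empirical disagreement over the aggregation of the datasets indexed by `T`. -/
def empDisAgg {n : Fin (N + 1) → ℕ} (Z : (t : Fin (N + 1)) → Fin (n t) → X × Bool)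
    (T : Finset (Fin (N + 1))) (h h' : X → Bool) : ℝ :=
  (∑ t ∈ T, ∑ i, if h (Z t i).1 ≠ h' (Z t i).1 then (1 : ℝ) else 0) / (∑ t ∈ T, (n t : ℝ))

/-- `h` is an ERM over the aggregated sample `Z^T`. -/
def IsERMAgg (H : Set (X → Bool)) {n : Fin (N + 1) → ℕ}
    (Z : (t : Fin (N + 1)) → Fin (n t) → X × Bool) (T : Finset (Fin (N + 1)))
    (h : X → Bool) : Prop :=
  h ∈ H ∧ ∀ h' ∈ H, empRiskAgg Z T h ≤ empRiskAgg Z T h'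

/-- Partial sum of sample sizes along the sorted order (real valued). -/
def NtR (n : Fin (N + 1) → ℕ) (σp : Equiv.Perm (Fin (N + 1))) (t : Fin (N + 1)) : ℝ :=
  ∑ s ∈ Finset.Iic t, (n (σp s) : ℝ)

/-- Partial sum of sample sizes along the sorted order (natural number valued). -/
def NtN (n : Fin (N + 1) → ℕ) (σp : Equiv.Perm (Fin (N + 1))) (t : Fin (N + 1)) : ℕ :=
  ∑ s ∈ Finset.Iic t, n (σp s)

/-- The average transfer exponent `ρ̄_t`. -/
def rhoBar (n : Fin (N + 1) → ℕ) (ρ : Fin (N + 1) → ℝ) (σp : Equiv.Perm (Fin (N + 1)))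
    (t : Fin (N + 1)) : ℝ :=
  (∑ s ∈ Finset.Iic t, (n (σp s) : ℝ) * ρ (σp s)) / NtR n σp t

/-- `σp` sorts the transfer exponents in nondecreasing order:
`ρ_(1) ≤ ρ_(2) ≤ … ≤ ρ_(N+1)`. -/
def SortedFor (ρ : Fin (N + 1) → ℝ) (σp : Equiv.Perm (Fin (N + 1))) : Prop :=
  ∀ i j : Fin (N + 1), i ≤ j → ρ (σp i) ≤ ρ (σp j)

/-- The oracle rate `Cr (Cc (d log(N_t/d) + log(1/δ)) / N_t)^{1/((2-β) ρ̄_t)}`. -/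
def rateB (Cr Cc β : ℝ) (d : ℕ) (δ : ℝ) (n : Fin (N + 1) → ℕ) (ρ : Fin (N + 1) → ℝ)
    (σp : Equiv.Perm (Fin (N + 1))) (t : Fin (N + 1)) : ℝ :=
  Cr * (Cc * ((d : ℝ) * plog (NtR n σp t / d) + plog (1 / δ)) / NtR n σp t)
      ^ (1 / ((2 - β) * rhoBar n ρ σp t))

/-- The minimax-lower-bound rate `(c₂ d / (N_t log² N_t))^{1/((2-β) ρ̄_t)}`. -/
def rateLow (β c2 : ℝ) (d : ℕ) (n : Fin (N + 1) → ℕ) (ρ : Fin (N + 1) → ℝ)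
    (σp : Equiv.Perm (Fin (N + 1))) (t : Fin (N + 1)) : ℝ :=
  (c2 * d / (NtR n σp t * plog (NtR n σp t) ^ 2)) ^ (1 / ((2 - β) * rhoBar n ρ σp t))

end Multi

section TwoPoint

variable {X : Type u} [MeasurableSpace X]

/-- The distribution on `{x₀, x₁} × {±1}` with marginal mass `w` at `x₁`,
regression value `η = P(Y = 1 | x₁)` and deterministic label `1` at `x₀`.
The label `+1` is encoded as `true` and `-1` as `false`. -/
def twoPt (x0 x1 : X) (w η : ℝ) : Measure (X × Bool) :=
  ENNReal.ofReal (w * η) • Measure.dirac (x1, true)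
    + ENNReal.ofReal (w * (1 - η)) • Measure.dirac (x1, false)
    + ENNReal.ofReal (1 - w) • Measure.dirac (x0, true)

/-- The sign `±1` associated with `σ : Bool`. -/
def sgn (σ : Bool) : ℝ := if σ then 1 else -1

/-- `ε = (n N_P)^{-1/(2-β)}`. -/
def epsSrc (β : ℝ) (n NP : ℕ) : ℝ := ((n * NP : ℕ) : ℝ) ^ (-(1 / (2 - β)))

/-- `ε₀ = 1 ∧ n_D^{-1/(2-β)}` (with the convention `1/0 = ∞`). -/
def epsTgt (β : ℝ) (nD : ℕ) : ℝ := (max 1 (nD : ℝ)) ^ (-(1 / (2 - β)))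

/-- The target distribution `D_σ`. -/
def Dtgt (x0 x1 : X) (β c0 : ℝ) (nD : ℕ) (σ : Bool) : Measure (X × Bool) :=
  twoPt x0 x1 (epsTgt β nD ^ β / 2) (1 / 2 + sgn σ * c0 * epsTgt β nD ^ (1 - β))

/-- The noisy source distribution `P_σ`. -/
def Psrc (x0 x1 : X) (β c1 : ℝ) (n NP : ℕ) (σ : Bool) : Measure (X × Bool) :=
  twoPt x0 x1 (c1 * epsSrc β n NP ^ β) (1 / 2 + sgn σ * epsSrc β n NP ^ (1 - β))

/-- The benign source distribution `Q_σ`. -/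
def Qsrc (x0 x1 : X) (σ : Bool) : Measure (X × Bool) :=
  twoPt x0 x1 1 ((1 + sgn σ) / 2)

/-- The mixture distribution `α_P P_σ^n + α_Q Q_σ^n` of a source block. -/
def blockM (x0 x1 : X) (β c1 : ℝ) (n NP NQ : ℕ) (σ : Bool) :
    Measure (Fin n → X × Bool) :=
  ENNReal.ofReal ((NP : ℝ) / (NP + NQ)) • Measure.pi (fun _ => Psrc x0 x1 β c1 n NP σ)
    + ENNReal.ofReal ((NQ : ℝ) / (NP + NQ)) • Measure.pi (fun _ => Qsrc x0 x1 σ)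

/-- The target block distribution `D_σ^{n_D}`. -/
def tgtM (x0 x1 : X) (β c0 : ℝ) (nD : ℕ) (σ : Bool) : Measure (Fin nD → X × Bool) :=
  Measure.pi fun _ => Dtgt x0 x1 β c0 nD σ

/-- The joint distribution `Γ_σ = (α_P P_σ^n + α_Q Q_σ^n)^N × D_σ^{n_D}`. -/
def Gamma (x0 x1 : X) (β c0 c1 : ℝ) (n nD NP NQ : ℕ) (σ : Bool) :
    Measure ((Fin (NP + NQ) → Fin n → X × Bool) × (Fin nD → X × Bool)) :=
  (Measure.pi fun _ : Fin (NP + NQ) => blockM x0 x1 β c1 n NP NQ σ).prod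
    (tgtM x0 x1 β c0 nD σ)

/-- A single source block together with the latent indicator of the mixture
component (`true` for the `P_σ` component, `false` for the `Q_σ` component). -/
def blockJ (x0 x1 : X) (β c1 : ℝ) (n NP NQ : ℕ) (σ : Bool) :
    Measure (Bool × (Fin n → X × Bool)) :=
  ENNReal.ofReal ((NP : ℝ) / (NP + NQ)) •
      (Measure.dirac true).prod (Measure.pi fun _ => Psrc x0 x1 β c1 n NP σ)
    + ENNReal.ofReal ((NQ : ℝ) / (NP + NQ)) •
      (Measure.dirac false).prod (Measure.pi fun _ => Qsrc x0 x1 σ)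

/-- The joint distribution `Γ_σ`, augmented with the latent component
indicators of the mixture blocks. -/
def GammaJ (x0 x1 : X) (β c0 c1 : ℝ) (n nD NP NQ : ℕ) (σ : Bool) :
    Measure ((Fin (NP + NQ) → Bool × (Fin n → X × Bool)) × (Fin nD → X × Bool)) :=
  (Measure.pi fun _ : Fin (NP + NQ) => blockJ x0 x1 β c1 n NP NQ σ).prod
    (tgtM x0 x1 β c0 nD σ)

/-- `N̂_σ(Z)`: number of homogeneous blocks with all points at `x₁` and label `σ`. -/
def NhatS (x1 : X) {Nn n : ℕ} (Zb : Fin Nn → Fin n → X × Bool) (σ : Bool) : ℕ :=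
  ({t | ∀ i, Zb t i = (x1, σ)} : Set (Fin Nn)).ncard

/-- `n̂_σ(Z)`: total number of points at `x₁` with label `σ`. -/
def nhatS (x1 : X) {Nn n : ℕ} (Zb : Fin Nn → Fin n → X × Bool) (σ : Bool) : ℕ :=
  ({p : Fin Nn × Fin n | Zb p.1 p.2 = (x1, σ)}).ncard

/-- `ñ_σ(Z) = n̂_σ(Z) − n N̂_σ(Z)`: number of points at `x₁` with label `σ`
excluding homogeneous blocks. -/
def ntildeS (x1 : X) {Nn n : ℕ} (Zb : Fin Nn → Fin n → X × Bool) (σ : Bool) : ℕ :=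
  nhatS x1 Zb σ - n * NhatS x1 Zb σ

/-- `N̂_P(W)`: number of homogeneous blocks generated by the `P₋` component. -/
def NhatP (x1 : X) {Nn n : ℕ} (Wb : Fin Nn → Bool × (Fin n → X × Bool)) : ℕ :=
  ({t | (Wb t).1 = true ∧ ∃ b, ∀ i, (Wb t).2 i = (x1, b)} : Set (Fin Nn)).ncard

/-- `N̂_Q(W)`: number of homogeneous blocks generated by the `Q₋` component. -/
def NhatQ (x1 : X) {Nn n : ℕ} (Wb : Fin Nn → Bool × (Fin n → X × Bool)) : ℕ :=
  ({t | (Wb t).1 = false ∧ ∃ b, ∀ i, (Wb t).2 i = (x1, b)} : Set (Fin Nn)).ncard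

end TwoPoint


open scoped Classical ENNReal

set_option maxHeartbeats 1000000


-- ncard of a set-of in a fintype as a filter card
lemma ncard_setOf_eq_card_filter {α : Type*} [Fintype α] (p : α → Prop) :
    ({x | p x} : Set α).ncard = (Finset.univ.filter p).card := by
  classical
  rw [Set.ncard_eq_toFinset_card']
  congr 1
  ext x; simp

-- any subset of a countable type with singletons measurable is measurable
lemma measurable_nat_pair {α : Type*} [MeasurableSpace α] {u v : α → ℕ}
    (hu : Measurable u) (hv : Measurable v) (g : ℕ → ℕ → ℕ) :
    Measurable fun x => g (u x) (v x) := by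
  intro s _
  have : (fun x => g (u x) (v x)) ⁻¹' s
      = (fun x => (u x, v x)) ⁻¹' {p : ℕ × ℕ | g p.1 p.2 ∈ s} := rfl
  rw [this]
  exact (hu.prodMk hv) ((Set.to_countable _).measurableSet)

lemma measurableSet_nat_lt {α : Type*} [MeasurableSpace α] {u v : α → ℕ}
    (hu : Measurable u) (hv : Measurable v) :
    MeasurableSet {x | u x < v x} := by
  have : {x | u x < v x} = (fun x => (u x, v x)) ⁻¹' {p : ℕ × ℕ | p.1 < p.2} := rfl
  rw [this]
  exact (hu.prodMk hv) ((Set.to_countable _).measurableSet)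

lemma measurable_card_filter {α ι : Type*} [MeasurableSpace α] [Fintype ι]
    (p : ι → α → Prop) (hp : ∀ i, MeasurableSet {x | p i x}) :
    Measurable fun x => (Finset.univ.filter (fun i => p i x)).card := by
  classical
  have h : ∀ x, (Finset.univ.filter (fun i => p i x)).card
      = ∑ i : ι, if p i x then 1 else 0 := by
    intro x; rw [Finset.card_filter]
  simp only [h]
  exact Finset.measurable_sum _ fun i _ => Measurable.ite (hp i) measurable_const measurable_const

-- partitioning a measure along fibers of a finite-valued map
lemma measure_eq_sum_fiber {α V : Type*} [MeasurableSpace α] [Fintype V]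
    (μ : Measure α) (f : α → V) (hf : ∀ v : V, MeasurableSet (f ⁻¹' {v}))
    (s : Set α) (hs : MeasurableSet s) :
    μ s = ∑ v : V, μ (s ∩ f ⁻¹' {v}) := by
  classical
  have hcov : s = ⋃ v : V, (s ∩ f ⁻¹' {v}) := by
    ext x; simp
  conv_lhs => rw [hcov]
  rw [measure_iUnion ?_ (fun v => hs.inter (hf v))]
  · exact tsum_fintype _
  · intro v w hvw
    simp only [Function.onFun]
    apply Set.disjoint_left.2
    rintro x ⟨-, hx⟩ ⟨-, hy⟩
    exact hvw (hx.symm.trans hy)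

-- finiteness of pi of finite measures
lemma isFiniteMeasure_pi {ι : Type*} [Fintype ι] {α : ι → Type*} [∀ i, MeasurableSpace (α i)]
    (μ : ∀ i, Measure (α i)) [∀ i, IsFiniteMeasure (μ i)] : IsFiniteMeasure (Measure.pi μ) := by
  constructor
  rw [Measure.pi_univ]
  exact ENNReal.prod_lt_top (fun i _ => measure_lt_top _ _)


section Blocks

variable {X : Type u} [MeasurableSpace X] [MeasurableSingletonClass X]

/-- all points at `(x1, b)` -/
def homSet (x1 : X) (n : ℕ) (b : Bool) : Set (Fin n → X × Bool) := {z | ∀ i, z i = (x1, b)}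

lemma measurableSet_homSet (x1 : X) (n : ℕ) (b : Bool) : MeasurableSet (homSet x1 n b) := by
  have : homSet x1 n b = ⋂ i : Fin n, (fun z : Fin n → X × Bool => z i) ⁻¹' {(x1, b)} := by
    ext z; simp [homSet]
  rw [this]
  exact MeasurableSet.iInter fun i => (measurable_pi_apply i) (measurableSet_singleton _)

lemma homSet_disjoint {x1 : X} {n : ℕ} (hn : 0 < n) {b b' : Bool}
    {z : Fin n → X × Bool} (hz : z ∈ homSet x1 n b) (hz' : z ∈ homSet x1 n b') :
    b = b' :=
  congrArg Prod.snd ((hz ⟨0, hn⟩).symm.trans (hz' ⟨0, hn⟩))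

/-- classification of a block -/
def blkPart (x1 : X) (n : ℕ) (ω : Bool × (Fin n → X × Bool)) : Bool × Option Bool :=
  (ω.1, if ω.2 ∈ homSet x1 n true then some true
        else if ω.2 ∈ homSet x1 n false then some false else none)

lemma blkPart_eq_iff {x1 : X} {n : ℕ} (hn : 0 < n) (ω : Bool × (Fin n → X × Bool))
    (fl : Bool) (o : Option Bool) :
    blkPart x1 n ω = (fl, o) ↔ ω.1 = fl ∧
      (match o with
       | some b => ω.2 ∈ homSet x1 n b
       | none => ∀ b, ω.2 ∉ homSet x1 n b) := by
  unfold blkPart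
  rw [Prod.mk.injEq]
  constructor
  · rintro ⟨h1, h2⟩
    refine ⟨h1, ?_⟩
    by_cases ht : ω.2 ∈ homSet x1 n true
    · rw [if_pos ht] at h2; subst h2; exact ht
    · rw [if_neg ht] at h2
      by_cases hf : ω.2 ∈ homSet x1 n false
      · rw [if_pos hf] at h2; subst h2; exact hf
      · rw [if_neg hf] at h2; subst h2
        intro b; cases b
        · exact hf
        · exact ht
  · rintro ⟨h1, h2⟩
    refine ⟨h1, ?_⟩
    match o with
    | some true => rw [if_pos h2]
    | some false =>
        have ht : ω.2 ∉ homSet x1 n true := by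
          intro hc; exact Bool.noConfusion (homSet_disjoint hn h2 hc)
        rw [if_neg ht, if_pos h2]
    | none =>
        rw [if_neg (h2 true), if_neg (h2 false)]

lemma measurableSet_blkPart_fiber (x1 : X) (n : ℕ) (hn : 0 < n) (v : Bool × Option Bool) :
    MeasurableSet (blkPart x1 n ⁻¹' {v}) := by
  obtain ⟨fl, o⟩ := v
  have h1 : MeasurableSet {ω : Bool × (Fin n → X × Bool) | ω.1 = fl} :=
    measurable_fst (measurableSet_singleton fl)
  match o with
  | some b =>
      have : blkPart x1 n ⁻¹' {(fl, some b)} =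
          {ω : Bool × (Fin n → X × Bool) | ω.1 = fl} ∩
          {ω : Bool × (Fin n → X × Bool) | ω.2 ∈ homSet x1 n b} := by
        ext ω
        simp only [Set.mem_preimage, Set.mem_singleton_iff, Set.mem_inter_iff, Set.mem_setOf_eq]
        exact blkPart_eq_iff hn ω fl (some b)
      rw [this]
      exact h1.inter (measurable_snd (measurableSet_homSet x1 n b))
  | none =>
      have : blkPart x1 n ⁻¹' {(fl, none)} =
          {ω : Bool × (Fin n → X × Bool) | ω.1 = fl} ∩
          (⋃ b, {ω : Bool × (Fin n → X × Bool) | ω.2 ∈ homSet x1 n b})ᶜ := by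
        ext ω
        simp only [Set.mem_preimage, Set.mem_singleton_iff, Set.mem_inter_iff,
          Set.mem_compl_iff, Set.mem_iUnion, Set.mem_setOf_eq, not_exists]
        exact blkPart_eq_iff hn ω fl none
      rw [this]
      exact h1.inter
        (MeasurableSet.iUnion fun b => measurable_snd (measurableSet_homSet x1 n b)).compl

/-- categories: ((flag, isHom), label) -/
abbrev Cat := (Bool × Bool) × Bool

def catTag (c : Cat) : Bool × Option Bool := (c.1.1, cond c.1.2 (some c.2) none)

def catScal (c : Cat) : ℝ≥0∞ := cond c.1.2 1 2⁻¹

variable (x1 : X) {n : ℕ} (μb : Measure (Bool × (Fin n → X × Bool)))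

/-- the component measures -/
def nuCat (c : Cat) : Measure (Bool × (Fin n → X × Bool)) :=
  catScal c • μb.restrict (blkPart x1 n ⁻¹' {catTag c})

lemma nuCat_apply (hn : 0 < n) (c : Cat) (s : Set (Bool × (Fin n → X × Bool))) :
    nuCat x1 μb c s = catScal c * μb (s ∩ blkPart x1 n ⁻¹' {catTag c}) := by
  rw [nuCat, Measure.smul_apply, smul_eq_mul,
    Measure.restrict_apply' (measurableSet_blkPart_fiber x1 n hn _)]

lemma nuCat_le (hn : 0 < n) (c : Cat) (s : Set (Bool × (Fin n → X × Bool))) :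
    nuCat x1 μb c s ≤ μb s := by
  rw [nuCat_apply x1 μb hn]
  calc catScal c * μb (s ∩ blkPart x1 n ⁻¹' {catTag c})
      ≤ 1 * μb s := by
        refine mul_le_mul' ?_ (measure_mono Set.inter_subset_left)
        unfold catScal; cases c.1.2 <;> simp [ENNReal.inv_le_one]
    _ = μb s := one_mul _

lemma isFiniteMeasure_nuCat (hn : 0 < n) [IsFiniteMeasure μb] (c : Cat) :
    IsFiniteMeasure (nuCat x1 μb c) :=
  ⟨lt_of_le_of_lt (nuCat_le x1 μb hn c Set.univ) (measure_lt_top _ _)⟩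

/-- summing scaled categories equals summing partition values -/
lemma sum_cat_scal (F : Bool × Option Bool → ℝ≥0∞) :
    ∑ c : Cat, catScal c * F (catTag c) = ∑ v : Bool × Option Bool, F v := by
  simp only [Fintype.sum_prod_type, Fintype.sum_option, Fintype.sum_bool, catTag, catScal,
    cond_true, cond_false, one_mul]
  have half : ∀ x : ℝ≥0∞, 2⁻¹ * x + 2⁻¹ * x = x := fun x => by
    rw [← add_mul, ENNReal.inv_two_add_inv_two, one_mul]
  rw [half, half]
  ring

/-- the decomposition of the block measure -/
lemma sum_nuCat (hn : 0 < n) : (∑ c : Cat, nuCat x1 μb c) = μb := by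
  ext s hs
  rw [Measure.finset_sum_apply]
  have hfib := measure_eq_sum_fiber μb (blkPart x1 n)
    (measurableSet_blkPart_fiber x1 n hn) s hs
  calc ∑ c : Cat, nuCat x1 μb c s
      = ∑ c : Cat, catScal c * μb (s ∩ blkPart x1 n ⁻¹' {catTag c}) := by
        refine Finset.sum_congr rfl fun c _ => nuCat_apply x1 μb hn c s
    _ = ∑ v : Bool × Option Bool, μb (s ∩ blkPart x1 n ⁻¹' {v}) :=
        sum_cat_scal (fun v => μb (s ∩ blkPart x1 n ⁻¹' {v}))
    _ = μb s := hfib.symm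

end Blocks




section Core

variable {X : Type u} [MeasurableSpace X] [MeasurableSingletonClass X]
variable (x1 : X) {n : ℕ} (μb : Measure (Bool × (Fin n → X × Bool)))
variable {Nn : ℕ}

/-- the product of component measures over categories -/
def piG (G : Fin Nn → Cat) : Measure (Fin Nn → Bool × (Fin n → X × Bool)) :=
  Measure.pi (fun t => nuCat x1 μb (G t))

lemma isFiniteMeasure_piG (hn : 0 < n) [IsFiniteMeasure μb] (G : Fin Nn → Cat) :
    IsFiniteMeasure (piG x1 μb G) := by
  haveI : ∀ t, IsFiniteMeasure (nuCat x1 μb (G t)) := fun t => isFiniteMeasure_nuCat x1 μb hn _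
  exact isFiniteMeasure_pi _

lemma pi_decomp (hn : 0 < n) [IsFiniteMeasure μb] :
    Measure.pi (fun _ : Fin Nn => μb) = ∑ G : Fin Nn → Cat, piG x1 μb G := by
  haveI : ∀ (G : Fin Nn → Cat) t, IsFiniteMeasure (nuCat x1 μb (G t)) :=
    fun G t => isFiniteMeasure_nuCat x1 μb hn _
  refine Measure.pi_eq fun s hs => ?_
  rw [Measure.finset_sum_apply]
  have h1 : ∀ G : Fin Nn → Cat, piG x1 μb G (Set.pi Set.univ s) = ∏ t, nuCat x1 μb (G t) (s t) :=
    fun G => Measure.pi_pi _ _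
  simp only [h1]
  have h2 : ∀ t : Fin Nn, (∑ c : Cat, nuCat x1 μb c (s t)) = μb (s t) := by
    intro t
    rw [← Measure.finset_sum_apply, sum_nuCat x1 μb hn]
  calc ∑ G : Fin Nn → Cat, ∏ t, nuCat x1 μb (G t) (s t)
      = ∑ G ∈ Fintype.piFinset (fun _ : Fin Nn => (Finset.univ : Finset Cat)),
          ∏ t, nuCat x1 μb (G t) (s t) := by rw [Fintype.piFinset_univ]
    _ = ∏ t, ∑ c : Cat, nuCat x1 μb c (s t) := (Finset.prod_univ_sum (fun _ : Fin Nn => (Finset.univ : Finset Cat))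
          (fun t c => nuCat x1 μb c (s t))).symm
    _ = ∏ t, μb (s t) := Finset.prod_congr rfl fun t _ => h2 t

/-- the support set of `piG` -/
def GGset (G : Fin Nn → Cat) : Set (Fin Nn → Bool × (Fin n → X × Bool)) :=
  Set.pi Set.univ (fun t => blkPart x1 n ⁻¹' {catTag (G t)})

lemma piG_inter_GG (hn : 0 < n) [IsFiniteMeasure μb] (G : Fin Nn → Cat)
    (E : Set (Fin Nn → Bool × (Fin n → X × Bool))) :
    piG x1 μb G E = piG x1 μb G (E ∩ GGset x1 G) := by
  haveI : ∀ t, IsFiniteMeasure (nuCat x1 μb (G t)) := fun t => isFiniteMeasure_nuCat x1 μb hn _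
  haveI := isFiniteMeasure_piG x1 μb hn G
  have hGGm : MeasurableSet (GGset x1 G) :=
    MeasurableSet.pi (Set.to_countable _) fun t _ => measurableSet_blkPart_fiber x1 n hn _
  have hGG : piG x1 μb G (GGset x1 G) = piG x1 μb G Set.univ := by
    rw [GGset, piG, Measure.pi_pi, Measure.pi_univ]
    refine Finset.prod_congr rfl fun t _ => ?_
    rw [nuCat_apply x1 μb hn, nuCat_apply x1 μb hn, Set.univ_inter, Set.inter_self]
  have h0 : piG x1 μb G (GGset x1 G)ᶜ = 0 := by
    rw [measure_compl hGGm (measure_ne_top _ _), hGG, tsub_self]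
  refine le_antisymm ?_ (measure_mono Set.inter_subset_left)
  calc piG x1 μb G E = piG x1 μb G ((E ∩ GGset x1 G) ∪ (E ∩ (GGset x1 G)ᶜ)) := by
        rw [Set.inter_union_compl]
    _ ≤ piG x1 μb G (E ∩ GGset x1 G) + piG x1 μb G (E ∩ (GGset x1 G)ᶜ) := measure_union_le _ _
    _ ≤ piG x1 μb G (E ∩ GGset x1 G) + 0 := by
        gcongr
        calc piG x1 μb G (E ∩ (GGset x1 G)ᶜ) ≤ piG x1 μb G (GGset x1 G)ᶜ :=
            measure_mono Set.inter_subset_right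
          _ = 0 := h0
    _ = piG x1 μb G (E ∩ GGset x1 G) := add_zero _

lemma GG_spec (hn : 0 < n) {G : Fin Nn → Cat} {ω : Fin Nn → Bool × (Fin n → X × Bool)}
    (hω : ω ∈ GGset x1 G) (t : Fin Nn) :
    (ω t).1 = (G t).1.1 ∧
      ((G t).1.2 = true → (ω t).2 ∈ homSet x1 n (G t).2) ∧
      ((G t).1.2 = false → ∀ b, (ω t).2 ∉ homSet x1 n b) := by
  have h' : blkPart x1 n (ω t) = catTag (G t) := hω t (Set.mem_univ t)
  by_cases hhm : (G t).1.2 = true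
  · have htag : catTag (G t) = ((G t).1.1, some (G t).2) := by rw [catTag, hhm]; rfl
    rw [htag] at h'
    obtain ⟨h1, h2⟩ := (blkPart_eq_iff hn (ω t) _ _).1 h'
    refine ⟨h1, fun _ => h2, fun hc => ?_⟩
    rw [hc] at hhm; exact Bool.noConfusion hhm
  · have hhm2 : (G t).1.2 = false := by revert hhm; cases (G t).1.2 <;> simp
    have htag : catTag (G t) = ((G t).1.1, none) := by rw [catTag, hhm2]; rfl
    rw [htag] at h'
    obtain ⟨h1, h2⟩ := (blkPart_eq_iff hn (ω t) _ _).1 h'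
    exact ⟨h1, fun hc => absurd hc hhm, fun _ => h2⟩

/-- counts of categories -/
def cntP (G : Fin Nn → Cat) : ℕ :=
  (Finset.univ.filter fun t => (G t).1.1 = true ∧ (G t).1.2 = true).card
def cntQ (G : Fin Nn → Cat) : ℕ :=
  (Finset.univ.filter fun t => (G t).1.1 = false ∧ (G t).1.2 = true).card
def cntS (G : Fin Nn → Cat) (σ : Bool) : ℕ :=
  (Finset.univ.filter fun t => (G t).1.2 = true ∧ (G t).2 = σ).card

lemma NhatP_on (hn : 0 < n) {G : Fin Nn → Cat} {ω : Fin Nn → Bool × (Fin n → X × Bool)}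
    (hω : ω ∈ GGset x1 G) : NhatP x1 ω = cntP G := by
  rw [NhatP, ncard_setOf_eq_card_filter, cntP]
  congr 1
  ext t
  simp only [Finset.mem_filter, Finset.mem_univ, true_and]
  obtain ⟨h1, h2, h3⟩ := GG_spec x1 hn hω t
  by_cases hhm : (G t).1.2 = true
  · simp only [h1, hhm, and_true]
    exact ⟨fun ⟨hf, _⟩ => hf, fun hf => ⟨hf, ⟨(G t).2, h2 hhm⟩⟩⟩
  · have hhm2 : (G t).1.2 = false := by revert hhm; cases (G t).1.2 <;> simp
    simp only [hhm2, Bool.false_eq_true, and_false, iff_false]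
    rintro ⟨-, b, hb⟩
    exact h3 hhm2 b hb

lemma NhatQ_on (hn : 0 < n) {G : Fin Nn → Cat} {ω : Fin Nn → Bool × (Fin n → X × Bool)}
    (hω : ω ∈ GGset x1 G) : NhatQ x1 ω = cntQ G := by
  rw [NhatQ, ncard_setOf_eq_card_filter, cntQ]
  congr 1
  ext t
  simp only [Finset.mem_filter, Finset.mem_univ, true_and]
  obtain ⟨h1, h2, h3⟩ := GG_spec x1 hn hω t
  by_cases hhm : (G t).1.2 = true
  · simp only [h1, hhm, and_true]
    exact ⟨fun ⟨hf, _⟩ => hf, fun hf => ⟨hf, ⟨(G t).2, h2 hhm⟩⟩⟩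
  · have hhm2 : (G t).1.2 = false := by revert hhm; cases (G t).1.2 <;> simp
    simp only [hhm2, Bool.false_eq_true, and_false, iff_false]
    rintro ⟨-, b, hb⟩
    exact h3 hhm2 b hb

lemma NhatS_on (hn : 0 < n) {G : Fin Nn → Cat} {ω : Fin Nn → Bool × (Fin n → X × Bool)}
    (hω : ω ∈ GGset x1 G) (σ : Bool) :
    NhatS x1 (fun t => (ω t).2) σ = cntS G σ := by
  rw [NhatS, ncard_setOf_eq_card_filter, cntS]
  congr 1
  ext t
  simp only [Finset.mem_filter, Finset.mem_univ, true_and]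
  obtain ⟨h1, h2, h3⟩ := GG_spec x1 hn hω t
  by_cases hhm : (G t).1.2 = true
  · simp only [hhm, true_and]
    constructor
    · intro hmem
      exact (homSet_disjoint hn (h2 hhm) hmem).symm ▸ rfl
    · intro hlb
      have := h2 hhm
      rw [hlb] at this
      exact this
  · have hhm2 : (G t).1.2 = false := by revert hhm; cases (G t).1.2 <;> simp
    simp only [hhm2, Bool.false_eq_true, false_and, iff_false]
    intro hmem
    exact h3 hhm2 σ hmem

end Core


/-- number of points of a block at `(x1, σ)` -/
def cB (x1 : X) {n : ℕ} (σ : Bool) (z : Fin n → X × Bool) : ℕ :=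
  (Finset.univ.filter fun i => z i = (x1, σ)).card

lemma cB_hom {x1 : X} {n : ℕ} {z : Fin n → X × Bool} {b : Bool}
    (hz : z ∈ homSet x1 n b) (σ : Bool) : cB x1 σ z = if b = σ then n else 0 := by
  by_cases hbσ : b = σ
  · subst hbσ
    rw [if_pos rfl, cB, Finset.filter_true_of_mem (fun i _ => hz i), Finset.card_univ,
      Fintype.card_fin]
  · rw [if_neg hbσ, cB, Finset.filter_false_of_mem, Finset.card_empty]
    intro i _ hc
    exact hbσ (congrArg Prod.snd ((hz i).symm.trans hc))

lemma sum_cB_eq_card {γ : Type*} [Fintype γ] (x1 : X) {n : ℕ}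
    (g : γ → Fin n → X × Bool) (σ : Bool) :
    ∑ s : γ, cB x1 σ (g s) =
      (Finset.univ.filter fun p : γ × Fin n => g p.1 p.2 = (x1, σ)).card := by
  rw [Finset.card_filter, Fintype.sum_prod_type]
  exact Finset.sum_congr rfl fun s _ => Finset.card_filter _ _

lemma nhatS_eq_sum (x1 : X) {Nn n : ℕ} (Zb : Fin Nn → Fin n → X × Bool) (σ : Bool) :
    nhatS x1 Zb σ = ∑ t, cB x1 σ (Zb t) := by
  rw [nhatS, ncard_setOf_eq_card_filter, sum_cB_eq_card]
  congr!

lemma NhatS_eq_card (x1 : X) {Nn n : ℕ} (Zb : Fin Nn → Fin n → X × Bool) (σ : Bool) :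
    NhatS x1 Zb σ = (Finset.univ.filter fun t => ∀ i, Zb t i = (x1, σ)).card := by
  rw [NhatS, ncard_setOf_eq_card_filter]
  congr!

lemma n_mul_NhatS_le (x1 : X) {Nn n : ℕ} (Zb : Fin Nn → Fin n → X × Bool) (σ : Bool) :
    n * NhatS x1 Zb σ ≤ nhatS x1 Zb σ := by
  classical
  rw [nhatS_eq_sum, NhatS_eq_card]
  calc n * (Finset.univ.filter fun t => ∀ i, Zb t i = (x1, σ)).card
      = ∑ _t ∈ (Finset.univ.filter fun t => ∀ i, Zb t i = (x1, σ)), n := by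
        rw [Finset.sum_const, smul_eq_mul, mul_comm]
    _ = ∑ t ∈ (Finset.univ.filter fun t => ∀ i, Zb t i = (x1, σ)), cB x1 σ (Zb t) := by
        refine Finset.sum_congr rfl fun t ht => ?_
        have hmem : Zb t ∈ homSet x1 n σ := (Finset.mem_filter.1 ht).2
        rw [cB_hom hmem σ, if_pos rfl]
    _ ≤ ∑ t, cB x1 σ (Zb t) :=
        Finset.sum_le_sum_of_subset (Finset.filter_subset _ _)

lemma ntildeS_add_eq (x1 : X) {Nn n : ℕ} (Zb : Fin Nn → Fin n → X × Bool) (σ : Bool) :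
    ntildeS x1 Zb σ + n * NhatS x1 Zb σ = nhatS x1 Zb σ :=
  Nat.sub_add_cancel (n_mul_NhatS_le x1 Zb σ)

section Core2

variable {X : Type u} [MeasurableSpace X] [MeasurableSingletonClass X]
variable (x1 : X) {n : ℕ} (μb : Measure (Bool × (Fin n → X × Bool)))
variable {Nn : ℕ}

lemma ntildeS_on (hn : 0 < n) {G : Fin Nn → Cat} {ω : Fin Nn → Bool × (Fin n → X × Bool)}
    (hω : ω ∈ GGset x1 G) (σ : Bool) :
    ntildeS x1 (fun t => (ω t).2) σ =
      ∑ t ∈ Finset.univ.filter (fun t => (G t).1.2 = false), cB x1 σ ((ω t).2) := by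
  classical
  have hsplit : nhatS x1 (fun t => (ω t).2) σ =
      n * cntS G σ +
        ∑ t ∈ Finset.univ.filter (fun t => (G t).1.2 = false), cB x1 σ ((ω t).2) := by
    rw [nhatS_eq_sum,
      ← Finset.sum_filter_add_sum_filter_not Finset.univ (fun t => (G t).1.2 = true)
        (fun t => cB x1 σ ((ω t).2))]
    congr 1
    · have h1 : ∀ t ∈ Finset.univ.filter (fun t => (G t).1.2 = true),
          cB x1 σ ((ω t).2) = if (G t).2 = σ then n else 0 := by
        intro t ht
        obtain ⟨-, h2, -⟩ := GG_spec x1 hn hω t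
        exact cB_hom (h2 (Finset.mem_filter.1 ht).2) σ
      rw [Finset.sum_congr rfl h1, ← Finset.sum_filter, Finset.filter_filter, cntS,
        Finset.sum_const, smul_eq_mul, mul_comm]
    · apply Finset.sum_congr
      · ext t
        simp [Bool.not_eq_true]
      · intros; rfl
  rw [ntildeS, NhatS_on x1 hn hω σ, hsplit, Nat.add_sub_cancel_left]

/-- the events -/
def evA (x1 : X) (n Nn : ℕ) : Set (Fin Nn → Bool × (Fin n → X × Bool)) :=
  {ω | NhatS x1 (fun t => (ω t).2) false < NhatS x1 (fun t => (ω t).2) true}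

def evB (x1 : X) (n Nn : ℕ) : Set (Fin Nn → Bool × (Fin n → X × Bool)) :=
  {ω | ntildeS x1 (fun t => (ω t).2) false < ntildeS x1 (fun t => (ω t).2) true}

def evL (x1 : X) (n Nn : ℕ) (a b : ℕ) : Set (Fin Nn → Bool × (Fin n → X × Bool)) :=
  {ω | NhatP x1 ω = a ∧ NhatQ x1 ω = b}

def evBres (x1 : X) {n Nn : ℕ} (G : Fin Nn → Cat) :
    Set (Fin Nn → Bool × (Fin n → X × Bool)) :=
  {ω | ∑ t ∈ Finset.univ.filter (fun t => (G t).1.2 = false), cB x1 false ((ω t).2) <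
       ∑ t ∈ Finset.univ.filter (fun t => (G t).1.2 = false), cB x1 true ((ω t).2)}

lemma evL_inter_GG (hn : 0 < n) (G : Fin Nn → Cat) (a b : ℕ) :
    evL x1 n Nn a b ∩ GGset x1 G =
      if cntP G = a ∧ cntQ G = b then GGset x1 G else (∅ : Set _) := by
  by_cases h : cntP G = a ∧ cntQ G = b
  · rw [if_pos h]
    ext ω
    refine ⟨fun hx => hx.2, fun hg => ⟨⟨?_, ?_⟩, hg⟩⟩
    · rw [NhatP_on x1 hn hg]; exact h.1
    · rw [NhatQ_on x1 hn hg]; exact h.2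
  · rw [if_neg h]
    ext ω
    simp only [Set.mem_inter_iff, Set.mem_empty_iff_false, iff_false, not_and]
    intro hL hg
    exact h ⟨(NhatP_on x1 hn hg).symm.trans hL.1, (NhatQ_on x1 hn hg).symm.trans hL.2⟩

lemma evA_inter_GG (hn : 0 < n) (G : Fin Nn → Cat) :
    evA x1 n Nn ∩ GGset x1 G =
      if cntS G false < cntS G true then GGset x1 G else (∅ : Set _) := by
  by_cases h : cntS G false < cntS G true
  · rw [if_pos h]
    ext ω
    refine ⟨fun hx => hx.2, fun hg => ⟨?_, hg⟩⟩
    show NhatS x1 (fun t => (ω t).2) false < NhatS x1 (fun t => (ω t).2) true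
    rw [NhatS_on x1 hn hg, NhatS_on x1 hn hg]; exact h
  · rw [if_neg h]
    ext ω
    simp only [Set.mem_inter_iff, Set.mem_empty_iff_false, iff_false, not_and]
    intro hA hg
    refine h ?_
    have : NhatS x1 (fun t => (ω t).2) false < NhatS x1 (fun t => (ω t).2) true := hA
    rwa [NhatS_on x1 hn hg, NhatS_on x1 hn hg] at this

lemma evB_inter_GG (hn : 0 < n) (G : Fin Nn → Cat) :
    evB x1 n Nn ∩ GGset x1 G = evBres x1 G ∩ GGset x1 G := by
  ext ω
  simp only [Set.mem_inter_iff, and_congr_left_iff]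
  intro hg
  show (ntildeS x1 (fun t => (ω t).2) false < ntildeS x1 (fun t => (ω t).2) true) ↔ _
  rw [ntildeS_on x1 hn hg, ntildeS_on x1 hn hg]
  exact Iff.rfl

end Core2


section Core3

variable {X : Type u} [MeasurableSpace X] [MeasurableSingletonClass X]
variable (x1 : X) {n : ℕ} (μb : Measure (Bool × (Fin n → X × Bool)))
variable {Nn : ℕ}

lemma piG_GG (hn : 0 < n) [IsFiniteMeasure μb] (G : Fin Nn → Cat) :
    piG x1 μb G (GGset x1 G) = piG x1 μb G Set.univ := by
  haveI : ∀ t, IsFiniteMeasure (nuCat x1 μb (G t)) := fun t => isFiniteMeasure_nuCat x1 μb hn _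
  rw [GGset, piG, Measure.pi_pi, Measure.pi_univ]
  refine Finset.prod_congr rfl fun t _ => ?_
  rw [nuCat_apply x1 μb hn, nuCat_apply x1 μb hn, Set.univ_inter, Set.inter_self]

/-- weights -/
def hKp (G : Fin Nn → Cat) : ℝ≥0∞ :=
  ∏ t ∈ Finset.univ.filter (fun t => (G t).1.2 = true), nuCat x1 μb (G t) Set.univ

def eKp (G : Fin Nn → Cat) : ℝ≥0∞ :=
  ∏ t ∈ Finset.univ.filter (fun t => ¬((G t).1.2 = true)), nuCat x1 μb (G t) Set.univ

lemma piG_univ_eq (hn : 0 < n) [IsFiniteMeasure μb] (G : Fin Nn → Cat) :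
    piG x1 μb G Set.univ = eKp x1 μb G * hKp x1 μb G := by
  haveI : ∀ t, IsFiniteMeasure (nuCat x1 μb (G t)) := fun t => isFiniteMeasure_nuCat x1 μb hn _
  rw [piG, Measure.pi_univ, eKp, hKp, mul_comm,
    Finset.prod_filter_mul_prod_filter_not Finset.univ (fun t => (G t).1.2 = true)]

lemma piG_evL (hn : 0 < n) [IsFiniteMeasure μb] (G : Fin Nn → Cat) (a b : ℕ) :
    piG x1 μb G (evL x1 n Nn a b) =
      (if cntP G = a ∧ cntQ G = b then 1 else 0) * piG x1 μb G Set.univ := by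
  rw [piG_inter_GG x1 μb hn, evL_inter_GG x1 hn G a b]
  by_cases h : cntP G = a ∧ cntQ G = b
  · rw [if_pos h, if_pos h, one_mul, piG_GG x1 μb hn]
  · rw [if_neg h, if_neg h, zero_mul, measure_empty]

lemma piG_evAL (hn : 0 < n) [IsFiniteMeasure μb] (G : Fin Nn → Cat) (a b : ℕ) :
    piG x1 μb G (evA x1 n Nn ∩ evL x1 n Nn a b) =
      (if cntS G false < cntS G true then 1 else 0) *
        ((if cntP G = a ∧ cntQ G = b then 1 else 0) * piG x1 μb G Set.univ) := by
  rw [piG_inter_GG x1 μb hn, Set.inter_assoc]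
  rw [evL_inter_GG x1 hn G a b]
  by_cases hl : cntP G = a ∧ cntQ G = b
  · rw [if_pos hl, if_pos hl, one_mul, evA_inter_GG x1 hn G]
    by_cases ha : cntS G false < cntS G true
    · rw [if_pos ha, if_pos ha, one_mul, piG_GG x1 μb hn]
    · rw [if_neg ha, if_neg ha, zero_mul, measure_empty]
  · rw [if_neg hl, if_neg hl, zero_mul, mul_zero, Set.inter_empty, measure_empty]

lemma piG_evBL (hn : 0 < n) [IsFiniteMeasure μb] (G : Fin Nn → Cat) (a b : ℕ) :
    piG x1 μb G (evB x1 n Nn ∩ evL x1 n Nn a b) =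
      (if cntP G = a ∧ cntQ G = b then 1 else 0) * piG x1 μb G (evBres x1 G) := by
  rw [piG_inter_GG x1 μb hn, Set.inter_assoc, evL_inter_GG x1 hn G a b]
  by_cases hl : cntP G = a ∧ cntQ G = b
  · rw [if_pos hl, if_pos hl, one_mul, evB_inter_GG x1 hn G,
      ← piG_inter_GG x1 μb hn]
  · rw [if_neg hl, if_neg hl, zero_mul, Set.inter_empty, measure_empty]

lemma piG_evABL (hn : 0 < n) [IsFiniteMeasure μb] (G : Fin Nn → Cat) (a b : ℕ) :
    piG x1 μb G (evA x1 n Nn ∩ evB x1 n Nn ∩ evL x1 n Nn a b) =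
      (if cntS G false < cntS G true then 1 else 0) *
        ((if cntP G = a ∧ cntQ G = b then 1 else 0) * piG x1 μb G (evBres x1 G)) := by
  rw [piG_inter_GG x1 μb hn, Set.inter_assoc, Set.inter_assoc, evL_inter_GG x1 hn G a b]
  by_cases hl : cntP G = a ∧ cntQ G = b
  · rw [if_pos hl, if_pos hl, one_mul]
    by_cases ha : cntS G false < cntS G true
    · rw [if_pos ha, one_mul]
      have h1 : evA x1 n Nn ∩ (evB x1 n Nn ∩ GGset x1 G) = evBres x1 G ∩ GGset x1 G := by
        calc evA x1 n Nn ∩ (evB x1 n Nn ∩ GGset x1 G)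
            = evA x1 n Nn ∩ (evBres x1 G ∩ GGset x1 G) := by rw [evB_inter_GG x1 hn G]
          _ = evBres x1 G ∩ (evA x1 n Nn ∩ GGset x1 G) := by
              rw [← Set.inter_assoc, Set.inter_comm (evA x1 n Nn), Set.inter_assoc]
          _ = evBres x1 G ∩ GGset x1 G := by rw [evA_inter_GG x1 hn G, if_pos ha]
      rw [h1, ← piG_inter_GG x1 μb hn]
    · rw [if_neg ha, zero_mul]
      have h1 : evA x1 n Nn ∩ (evB x1 n Nn ∩ GGset x1 G) ⊆ evA x1 n Nn ∩ GGset x1 G :=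
        fun ω hω => ⟨hω.1, hω.2.2⟩
      refine le_antisymm ?_ zero_le
      calc piG x1 μb G (evA x1 n Nn ∩ (evB x1 n Nn ∩ GGset x1 G))
          ≤ piG x1 μb G (evA x1 n Nn ∩ GGset x1 G) := measure_mono h1
        _ = 0 := by rw [evA_inter_GG x1 hn G, if_neg ha, measure_empty]
  · rw [if_neg hl, Set.inter_empty, Set.inter_empty, measure_empty, if_neg hl, zero_mul, mul_zero]

end Core3


section Core4

variable {X : Type u} [MeasurableSpace X] [MeasurableSingletonClass X]
variable (x1 : X) {n : ℕ} (μb : Measure (Bool × (Fin n → X × Bool)))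
variable {Nn : ℕ}

lemma nuCat_label_irrel (c₁ c₂ : Cat) (h1 : c₁.1 = c₂.1) (h2 : c₁.1.2 = false) :
    nuCat x1 μb c₁ = nuCat x1 μb c₂ := by
  obtain ⟨⟨f1, m1⟩, l1⟩ := c₁
  obtain ⟨⟨f2, m2⟩, l2⟩ := c₂
  injection h1 with hf hm
  subst hf; subst hm
  have h2' : m1 = false := h2
  subst h2'
  rfl

def Gof {Nn : ℕ} (K : Fin Nn → Bool × Bool) (ℓ : Fin Nn → Bool) : Fin Nn → Cat :=
  fun t => (K t, ℓ t)

def B0K (x1 : X) (n : ℕ) {Nn : ℕ} (K : Fin Nn → Bool × Bool) :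
    Set ({t : Fin Nn // (K t).2 = false} → Bool × (Fin n → X × Bool)) :=
  {f | ∑ s, cB x1 false ((f s).2) < ∑ s, cB x1 true ((f s).2)}

def dKp (K : Fin Nn → Bool × Bool) : ℝ≥0∞ :=
  Measure.pi (fun s : {t : Fin Nn // (K t).2 = false} => nuCat x1 μb (K s.1, true)) (B0K x1 n K)

lemma measurable_sum_cB {γ : Type*} [Fintype γ] (σ : Bool) :
    Measurable fun f : γ → Bool × (Fin n → X × Bool) => ∑ s, cB x1 σ ((f s).2) := by
  classical
  have hfe : (fun f : γ → Bool × (Fin n → X × Bool) => ∑ s, cB x1 σ ((f s).2))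
      = fun f => (Finset.univ.filter fun p : γ × Fin n => (f p.1).2 p.2 = (x1, σ)).card := by
    funext f
    rw [sum_cB_eq_card x1 (fun s => (f s).2) σ]
  rw [hfe]
  have h := measurable_card_filter
    (fun (q : γ × Fin n) (f : γ → Bool × (Fin n → X × Bool)) => (f q.1).2 q.2 = (x1, σ))
    (fun p => by
      have hm : Measurable fun f : γ → Bool × (Fin n → X × Bool) => (f p.1).2 p.2 :=
        (measurable_pi_apply p.2).comp (measurable_snd.comp (measurable_pi_apply p.1))
      exact hm (measurableSet_singleton (x1, σ)))
  convert h using 1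
  funext f
  congr!

lemma measurableSet_B0K (K : Fin Nn → Bool × Bool) : MeasurableSet (B0K x1 n K) :=
  measurableSet_nat_lt (measurable_sum_cB x1 false) (measurable_sum_cB x1 true)

lemma piG_evBres_fact (hn : 0 < n) [IsFiniteMeasure μb]
    (K : Fin Nn → Bool × Bool) (ℓ : Fin Nn → Bool) :
    piG x1 μb (Gof K ℓ) (evBres x1 (Gof K ℓ)) = dKp x1 μb K * hKp x1 μb (Gof K ℓ) := by
  classical
  haveI h1 : ∀ t, IsFiniteMeasure (nuCat x1 μb (Gof K ℓ t)) :=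
    fun t => isFiniteMeasure_nuCat x1 μb hn _
  haveI h2 : ∀ s : {t : Fin Nn // (K t).2 = false}, IsFiniteMeasure (nuCat x1 μb (K s.1, true)) :=
    fun s => isFiniteMeasure_nuCat x1 μb hn _
  have mp := measurePreserving_piEquivPiSubtypeProd
    (fun t => nuCat x1 μb (Gof K ℓ t)) (fun t => (K t).2 = false)
  have hpre : evBres x1 (Gof K ℓ) =
      (MeasurableEquiv.piEquivPiSubtypeProd (fun _ : Fin Nn => Bool × (Fin n → X × Bool))
        (fun t => (K t).2 = false)) ⁻¹' (B0K x1 n K ×ˢ Set.univ) := by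
    ext ω
    have hL : ((MeasurableEquiv.piEquivPiSubtypeProd (fun _ : Fin Nn => Bool × (Fin n → X × Bool))
        (fun t => (K t).2 = false)) ω).1 = fun s : {t : Fin Nn // (K t).2 = false} => ω s.1 := rfl
    simp only [Set.mem_preimage, Set.mem_prod, Set.mem_univ, and_true, hL]
    rw [evBres, B0K]
    simp only [Set.mem_setOf_eq]
    rw [Finset.sum_subtype (p := fun t => (K t).2 = false)
        (Finset.univ.filter fun t => (Gof K ℓ t).1.2 = false)
        (fun t => by rw [Finset.mem_filter]; simp [Gof]) (fun t => cB x1 false ((ω t).2)),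
      Finset.sum_subtype (p := fun t => (K t).2 = false)
        (Finset.univ.filter fun t => (Gof K ℓ t).1.2 = false)
        (fun t => by rw [Finset.mem_filter]; simp [Gof]) (fun t => cB x1 true ((ω t).2))]
  haveI : IsFiniteMeasure (Measure.pi fun s : {t : Fin Nn // (K t).2 = false} =>
      nuCat x1 μb (Gof K ℓ s.1)) := isFiniteMeasure_pi _
  haveI : IsFiniteMeasure (Measure.pi fun s : {t : Fin Nn // ¬((K t).2 = false)} =>
      nuCat x1 μb (Gof K ℓ s.1)) := isFiniteMeasure_pi _
  rw [piG, hpre,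
    mp.measure_preimage ((measurableSet_B0K x1 K).prod MeasurableSet.univ).nullMeasurableSet,
    Measure.prod_prod]
  congr 1
  · have hfam : (fun s : {t : Fin Nn // (K t).2 = false} => nuCat x1 μb (Gof K ℓ s.1))
        = fun s => nuCat x1 μb (K s.1, true) :=
      funext fun s => nuCat_label_irrel x1 μb _ _ rfl s.2
    rw [dKp, hfam]
  · rw [Measure.pi_univ, hKp]
    rw [Finset.prod_subtype (Finset.univ.filter fun t => (Gof K ℓ t).1.2 = true)
      (p := fun t => ¬((K t).2 = false))
      (fun t => by rw [Finset.mem_filter]; simp [Gof]) (fun t => nuCat x1 μb (Gof K ℓ t) Set.univ)]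

end Core4


section Core5

variable {X : Type u} [MeasurableSpace X] [MeasurableSingletonClass X]
variable (x1 : X) {n : ℕ} (μb : Measure (Bool × (Fin n → X × Bool)))
variable {Nn : ℕ}

/-- counts in terms of the coarse data -/
def aKn (K : Fin Nn → Bool × Bool) : ℕ :=
  (Finset.univ.filter fun t => (K t).1 = true ∧ (K t).2 = true).card
def bKn (K : Fin Nn → Bool × Bool) : ℕ :=
  (Finset.univ.filter fun t => (K t).1 = false ∧ (K t).2 = true).card

lemma cntP_Gof (K : Fin Nn → Bool × Bool) (ℓ : Fin Nn → Bool) : cntP (Gof K ℓ) = aKn K := rfl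
lemma cntQ_Gof (K : Fin Nn → Bool × Bool) (ℓ : Fin Nn → Bool) : cntQ (Gof K ℓ) = bKn K := rfl

/-- label-sum quantities -/
def SAq (K : Fin Nn → Bool × Bool) : ℝ≥0∞ :=
  ∑ ℓ : Fin Nn → Bool,
    (if cntS (Gof K ℓ) false < cntS (Gof K ℓ) true then (1 : ℝ≥0∞) else 0) *
      hKp x1 μb (Gof K ℓ)

def STq (K : Fin Nn → Bool × Bool) : ℝ≥0∞ :=
  ∑ ℓ : Fin Nn → Bool, hKp x1 μb (Gof K ℓ)

def eK0 (K : Fin Nn → Bool × Bool) : ℝ≥0∞ :=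
  ∏ t ∈ Finset.univ.filter (fun t => ¬((K t).2 = true)), nuCat x1 μb (K t, true) Set.univ

lemma eKp_Gof (K : Fin Nn → Bool × Bool) (ℓ : Fin Nn → Bool) :
    eKp x1 μb (Gof K ℓ) = eK0 x1 μb K := by
  rw [eKp, eK0]
  refine Finset.prod_congr rfl fun t ht => ?_
  have h2 : (K t).2 = false := by
    have := (Finset.mem_filter.1 ht).2
    revert this; cases (K t).2 <;> simp [Gof]
  rw [nuCat_label_irrel x1 μb (Gof K ℓ t) (K t, true) rfl h2]

lemma sum_G_reindex (F : (Fin Nn → Cat) → ℝ≥0∞) :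
    ∑ G : Fin Nn → Cat, F G =
      ∑ K : Fin Nn → Bool × Bool, ∑ ℓ : Fin Nn → Bool, F (Gof K ℓ) := by
  calc ∑ G : Fin Nn → Cat, F G
      = ∑ q : (Fin Nn → Bool × Bool) × (Fin Nn → Bool), F (Gof q.1 q.2) :=
        Fintype.sum_equiv (Equiv.arrowProdEquivProdArrow (Fin Nn) (fun _ => Bool × Bool) (fun _ => Bool))
          F (fun q => F (Gof q.1 q.2)) (fun G => congrArg F (funext fun t => Prod.mk.eta.symm))
    _ = ∑ K : Fin Nn → Bool × Bool, ∑ ℓ : Fin Nn → Bool, F (Gof K ℓ) := by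
        rw [Fintype.sum_prod_type]

/-- coarse classifier -/
def classOf (K : Fin Nn → Bool × Bool) (t : Fin Nn) : Option Bool :=
  if (K t).2 = true then some (K t).1 else none

lemma exists_perm (K K' : Fin Nn → Bool × Bool) (ha : aKn K = aKn K') (hb : bKn K = bKn K') :
    ∃ τ : Equiv.Perm (Fin Nn), ∀ t, classOf K (τ t) = classOf K' t := by
  classical
  have hst : ∀ J : Fin Nn → Bool × Bool,
      (Finset.univ.filter fun t => classOf J t = some true).card = aKn J := by
    intro J
    rw [aKn]
    congr 1
    ext t
    simp only [Finset.mem_filter, Finset.mem_univ, true_and, classOf]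
    by_cases h : (J t).2 = true <;> simp [h]
  have hsf : ∀ J : Fin Nn → Bool × Bool,
      (Finset.univ.filter fun t => classOf J t = some false).card = bKn J := by
    intro J
    rw [bKn]
    congr 1
    ext t
    simp only [Finset.mem_filter, Finset.mem_univ, true_and, classOf]
    by_cases h : (J t).2 = true <;> simp [h]
  have htot : ∀ J : Fin Nn → Bool × Bool,
      ∑ c : Option Bool, (Finset.univ.filter fun t => classOf J t = c).card = Nn := by
    intro J
    rw [← Finset.card_eq_sum_card_fiberwise (fun x _ => Finset.mem_univ (classOf J x)),
      Finset.card_univ, Fintype.card_fin]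
  have hcard : ∀ c : Option Bool,
      Fintype.card {t // classOf K' t = c} = Fintype.card {t // classOf K t = c} := by
    intro c
    rw [Fintype.card_subtype, Fintype.card_subtype]
    have e1 := htot K
    have e2 := htot K'
    rw [Fintype.sum_option, Fintype.sum_bool] at e1 e2
    rw [hst, hsf] at e1 e2
    match c with
    | some true => rw [hst, hst, ha]
    | some false => rw [hsf, hsf, hb]
    | none => omega
  exact ⟨Equiv.ofFiberEquiv (fun c => Fintype.equivOfCardEq (hcard c)),
    fun t => Equiv.ofFiberEquiv_map (fun c => Fintype.equivOfCardEq (hcard c)) t⟩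

lemma sum_label_invariant (K K' : Fin Nn → Bool × Bool)
    (ha : aKn K = aKn K') (hb : bKn K = bKn K') (φ : ℕ → ℕ → ℝ≥0∞) :
    ∑ ℓ : Fin Nn → Bool,
        φ (cntS (Gof K ℓ) false) (cntS (Gof K ℓ) true) * hKp x1 μb (Gof K ℓ) =
      ∑ ℓ : Fin Nn → Bool,
        φ (cntS (Gof K' ℓ) false) (cntS (Gof K' ℓ) true) * hKp x1 μb (Gof K' ℓ) := by
  classical
  obtain ⟨τ, hτ⟩ := exists_perm K K' ha hb
  have hhm : ∀ t, (K (τ t)).2 = (K' t).2 := by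
    intro t
    have h := hτ t
    unfold classOf at h
    by_cases h1 : (K (τ t)).2 = true <;> by_cases h2 : (K' t).2 = true
    · rw [h1, h2]
    · rw [if_pos h1, if_neg h2] at h; exact absurd h (by simp)
    · rw [if_neg h1, if_pos h2] at h; exact absurd h (by simp)
    · have e1 : (K (τ t)).2 = false := by revert h1; cases (K (τ t)).2 <;> simp
      have e2 : (K' t).2 = false := by revert h2; cases (K' t).2 <;> simp
      rw [e1, e2]
  have hfl : ∀ t, (K' t).2 = true → K (τ t) = K' t := by
    intro t h2
    have h := hτ t
    unfold classOf at h
    have h1 : (K (τ t)).2 = true := (hhm t).trans h2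
    rw [if_pos h1, if_pos h2] at h
    exact Prod.ext (Option.some.inj h) (h1.trans h2.symm)
  refine Fintype.sum_equiv (Equiv.arrowCongr τ.symm (Equiv.refl Bool)) _ _ fun ℓ => ?_
  have he : (Equiv.arrowCongr τ.symm (Equiv.refl Bool)) ℓ = ℓ ∘ τ := rfl
  rw [he]
  have hcnt : ∀ σ : Bool, cntS (Gof K ℓ) σ = cntS (Gof K' (ℓ ∘ τ)) σ := by
    intro σ
    rw [cntS, cntS, Finset.card_filter, Finset.card_filter]
    calc (∑ s, if (Gof K ℓ s).1.2 = true ∧ (Gof K ℓ s).2 = σ then 1 else 0)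
        = ∑ t, if (Gof K ℓ (τ t)).1.2 = true ∧ (Gof K ℓ (τ t)).2 = σ then 1 else 0 :=
          (Equiv.sum_comp τ fun s =>
            if (Gof K ℓ s).1.2 = true ∧ (Gof K ℓ s).2 = σ then 1 else 0).symm
      _ = ∑ t, if (Gof K' (ℓ ∘ τ) t).1.2 = true ∧ (Gof K' (ℓ ∘ τ) t).2 = σ then 1 else 0 := by
          refine Finset.sum_congr rfl fun t _ => ?_
          refine if_congr (and_congr ?_ Iff.rfl) rfl rfl
          show (K (τ t)).2 = true ↔ (K' t).2 = true
          rw [hhm t]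
  have hprod : hKp x1 μb (Gof K ℓ) = hKp x1 μb (Gof K' (ℓ ∘ τ)) := by
    rw [hKp, hKp, Finset.prod_filter, Finset.prod_filter]
    calc (∏ s, if (Gof K ℓ s).1.2 = true then nuCat x1 μb (Gof K ℓ s) Set.univ else 1)
        = ∏ t, if (Gof K ℓ (τ t)).1.2 = true then nuCat x1 μb (Gof K ℓ (τ t)) Set.univ else 1 :=
          (Equiv.prod_comp τ fun s =>
            if (Gof K ℓ s).1.2 = true then nuCat x1 μb (Gof K ℓ s) Set.univ else 1).symm
      _ = ∏ t, if (Gof K' (ℓ ∘ τ) t).1.2 = true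
            then nuCat x1 μb (Gof K' (ℓ ∘ τ) t) Set.univ else 1 := by
          refine Finset.prod_congr rfl fun t _ => ?_
          show (if (K (τ t)).2 = true then nuCat x1 μb (K (τ t), ℓ (τ t)) Set.univ else 1) =
            (if (K' t).2 = true then nuCat x1 μb (K' t, ℓ (τ t)) Set.univ else 1)
          by_cases h2 : (K' t).2 = true
          · have h1 : (K (τ t)).2 = true := (hhm t).trans h2
            rw [if_pos h1, if_pos h2, hfl t h2]
          · have h1 : ¬((K (τ t)).2 = true) := fun hc => h2 ((hhm t).symm.trans hc)
            rw [if_neg h1, if_neg h2]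
  rw [hcnt, hcnt, hprod]

end Core5


lemma core_identity {X : Type u} [MeasurableSpace X] [MeasurableSingletonClass X]
    (x1 : X) {n Nn : ℕ} (hn : 0 < n)
    (μb : Measure (Bool × (Fin n → X × Bool))) [IsFiniteMeasure μb] (a b : ℕ) :
    Measure.pi (fun _ : Fin Nn => μb) (evA x1 n Nn ∩ evB x1 n Nn ∩ evL x1 n Nn a b) *
        Measure.pi (fun _ : Fin Nn => μb) (evL x1 n Nn a b) =
      Measure.pi (fun _ : Fin Nn => μb) (evA x1 n Nn ∩ evL x1 n Nn a b) *
        Measure.pi (fun _ : Fin Nn => μb) (evB x1 n Nn ∩ evL x1 n Nn a b) := by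
  classical
  have hdec := pi_decomp x1 μb hn (Nn := Nn)
  set indL : (Fin Nn → Bool × Bool) → ℝ≥0∞ :=
    fun K => if aKn K = a ∧ bKn K = b then 1 else 0 with hindL
  have expand : ∀ E : Set (Fin Nn → Bool × (Fin n → X × Bool)),
      Measure.pi (fun _ : Fin Nn => μb) E = ∑ K, ∑ ℓ, piG x1 μb (Gof K ℓ) E := by
    intro E
    rw [hdec, Measure.finset_sum_apply]
    exact sum_G_reindex (fun G => piG x1 μb G E)
  have eABL : Measure.pi (fun _ : Fin Nn => μb)
        (evA x1 n Nn ∩ evB x1 n Nn ∩ evL x1 n Nn a b)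
      = ∑ K, indL K * (dKp x1 μb K * SAq x1 μb K) := by
    rw [expand]
    refine Finset.sum_congr rfl fun K _ => ?_
    rw [SAq, Finset.mul_sum, Finset.mul_sum]
    refine Finset.sum_congr rfl fun ℓ _ => ?_
    rw [piG_evABL x1 μb hn (Gof K ℓ) a b, piG_evBres_fact x1 μb hn K ℓ, cntP_Gof, cntQ_Gof]
    rw [hindL]
    ring
  have eL : Measure.pi (fun _ : Fin Nn => μb) (evL x1 n Nn a b)
      = ∑ K, indL K * (eK0 x1 μb K * STq x1 μb K) := by
    rw [expand]
    refine Finset.sum_congr rfl fun K _ => ?_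
    rw [STq, Finset.mul_sum, Finset.mul_sum]
    refine Finset.sum_congr rfl fun ℓ _ => ?_
    rw [piG_evL x1 μb hn (Gof K ℓ) a b, piG_univ_eq x1 μb hn (Gof K ℓ), cntP_Gof, cntQ_Gof,
      eKp_Gof, hindL]
  have eAL : Measure.pi (fun _ : Fin Nn => μb) (evA x1 n Nn ∩ evL x1 n Nn a b)
      = ∑ K, indL K * (eK0 x1 μb K * SAq x1 μb K) := by
    rw [expand]
    refine Finset.sum_congr rfl fun K _ => ?_
    rw [SAq, Finset.mul_sum, Finset.mul_sum]
    refine Finset.sum_congr rfl fun ℓ _ => ?_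
    rw [piG_evAL x1 μb hn (Gof K ℓ) a b, piG_univ_eq x1 μb hn (Gof K ℓ), cntP_Gof, cntQ_Gof,
      eKp_Gof, hindL]
    ring
  have eBL : Measure.pi (fun _ : Fin Nn => μb) (evB x1 n Nn ∩ evL x1 n Nn a b)
      = ∑ K, indL K * (dKp x1 μb K * STq x1 μb K) := by
    rw [expand]
    refine Finset.sum_congr rfl fun K _ => ?_
    rw [STq, Finset.mul_sum, Finset.mul_sum]
    refine Finset.sum_congr rfl fun ℓ _ => ?_
    rw [piG_evBL x1 μb hn (Gof K ℓ) a b, piG_evBres_fact x1 μb hn K ℓ, cntP_Gof, cntQ_Gof,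
      hindL]
  have hSA : ∀ K K' : Fin Nn → Bool × Bool, (aKn K = a ∧ bKn K = b) →
      (aKn K' = a ∧ bKn K' = b) → SAq x1 μb K = SAq x1 μb K' := by
    intro K K' h h'
    rw [SAq, SAq]
    exact sum_label_invariant x1 μb K K' (h.1.trans h'.1.symm) (h.2.trans h'.2.symm)
      (fun u v => if u < v then 1 else 0)
  have hST : ∀ K K' : Fin Nn → Bool × Bool, (aKn K = a ∧ bKn K = b) →
      (aKn K' = a ∧ bKn K' = b) → STq x1 μb K = STq x1 μb K' := by
    intro K K' h h'
    have := sum_label_invariant x1 μb K K' (h.1.trans h'.1.symm) (h.2.trans h'.2.symm)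
      (fun _ _ => 1)
    rw [STq, STq]
    simpa [one_mul] using this
  rw [eABL, eL, eAL, eBL, Finset.sum_mul_sum, Finset.sum_mul_sum]
  calc ∑ K, ∑ K', (indL K * (dKp x1 μb K * SAq x1 μb K)) *
          (indL K' * (eK0 x1 μb K' * STq x1 μb K'))
      = ∑ K, ∑ K', (indL K' * (eK0 x1 μb K' * SAq x1 μb K')) *
          (indL K * (dKp x1 μb K * STq x1 μb K)) := by
        refine Finset.sum_congr rfl fun K _ => Finset.sum_congr rfl fun K' _ => ?_
        by_cases hK : aKn K = a ∧ bKn K = b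
        · by_cases hK' : aKn K' = a ∧ bKn K' = b
          · rw [hSA K K' hK hK', hST K K' hK hK']
            ring
          · simp only [hindL, if_neg hK']
            ring
        · simp only [hindL, if_neg hK]
          ring
    _ = ∑ K', ∑ K, (indL K' * (eK0 x1 μb K' * SAq x1 μb K')) *
          (indL K * (dKp x1 μb K * STq x1 μb K)) := Finset.sum_comm


section Meas

variable {X : Type u} [MeasurableSpace X] [MeasurableSingletonClass X]
variable (x1 : X) {n Nn : ℕ}

lemma measurable_NhatP :
    Measurable fun ω : Fin Nn → Bool × (Fin n → X × Bool) => NhatP x1 ω := by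
  classical
  have hfe : (fun ω : Fin Nn → Bool × (Fin n → X × Bool) => NhatP x1 ω) = fun ω =>
      (Finset.univ.filter fun t =>
        (ω t).1 = true ∧ ∃ b : Bool, ∀ i, (ω t).2 i = (x1, b)).card := by
    funext ω
    rw [NhatP, ncard_setOf_eq_card_filter]
    congr!
  rw [hfe]
  have h := measurable_card_filter
    (fun (t : Fin Nn) (ω : Fin Nn → Bool × (Fin n → X × Bool)) =>
      (ω t).1 = true ∧ ∃ b : Bool, ∀ i, (ω t).2 i = (x1, b))
    (fun t => by
      have h1 : MeasurableSet {ω : Fin Nn → Bool × (Fin n → X × Bool) | (ω t).1 = true} :=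
        (measurable_fst.comp (measurable_pi_apply t)) (measurableSet_singleton true)
      have h2 : MeasurableSet {ω : Fin Nn → Bool × (Fin n → X × Bool) |
          ∃ b : Bool, ∀ i, (ω t).2 i = (x1, b)} := by
        have : {ω : Fin Nn → Bool × (Fin n → X × Bool) | ∃ b : Bool, ∀ i, (ω t).2 i = (x1, b)}
            = ⋃ b : Bool, ⋂ i : Fin n,
                {ω : Fin Nn → Bool × (Fin n → X × Bool) | (ω t).2 i = (x1, b)} := by
          ext ω; simp
        rw [this]
        refine MeasurableSet.iUnion fun b => MeasurableSet.iInter fun i => ?_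
        have hm : Measurable fun ω : Fin Nn → Bool × (Fin n → X × Bool) => (ω t).2 i :=
          (measurable_pi_apply i).comp (measurable_snd.comp (measurable_pi_apply t))
        exact hm (measurableSet_singleton (x1, b))
      exact h1.inter h2)
  convert h using 1
  funext ω
  congr!

lemma measurable_NhatQ :
    Measurable fun ω : Fin Nn → Bool × (Fin n → X × Bool) => NhatQ x1 ω := by
  classical
  have hfe : (fun ω : Fin Nn → Bool × (Fin n → X × Bool) => NhatQ x1 ω) = fun ω =>
      (Finset.univ.filter fun t =>
        (ω t).1 = false ∧ ∃ b : Bool, ∀ i, (ω t).2 i = (x1, b)).card := by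
    funext ω
    rw [NhatQ, ncard_setOf_eq_card_filter]
    congr!
  rw [hfe]
  have h := measurable_card_filter
    (fun (t : Fin Nn) (ω : Fin Nn → Bool × (Fin n → X × Bool)) =>
      (ω t).1 = false ∧ ∃ b : Bool, ∀ i, (ω t).2 i = (x1, b))
    (fun t => by
      have h1 : MeasurableSet {ω : Fin Nn → Bool × (Fin n → X × Bool) | (ω t).1 = false} :=
        (measurable_fst.comp (measurable_pi_apply t)) (measurableSet_singleton false)
      have h2 : MeasurableSet {ω : Fin Nn → Bool × (Fin n → X × Bool) |
          ∃ b : Bool, ∀ i, (ω t).2 i = (x1, b)} := by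
        have : {ω : Fin Nn → Bool × (Fin n → X × Bool) | ∃ b : Bool, ∀ i, (ω t).2 i = (x1, b)}
            = ⋃ b : Bool, ⋂ i : Fin n,
                {ω : Fin Nn → Bool × (Fin n → X × Bool) | (ω t).2 i = (x1, b)} := by
          ext ω; simp
        rw [this]
        refine MeasurableSet.iUnion fun b => MeasurableSet.iInter fun i => ?_
        have hm : Measurable fun ω : Fin Nn → Bool × (Fin n → X × Bool) => (ω t).2 i :=
          (measurable_pi_apply i).comp (measurable_snd.comp (measurable_pi_apply t))
        exact hm (measurableSet_singleton (x1, b))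
      exact h1.inter h2)
  convert h using 1
  funext ω
  congr!

lemma measurable_NhatS (σ : Bool) :
    Measurable fun ω : Fin Nn → Bool × (Fin n → X × Bool) =>
      NhatS x1 (fun t => (ω t).2) σ := by
  classical
  have hfe : (fun ω : Fin Nn → Bool × (Fin n → X × Bool) => NhatS x1 (fun t => (ω t).2) σ)
      = fun ω => (Finset.univ.filter fun t => ∀ i, (ω t).2 i = (x1, σ)).card := by
    funext ω
    rw [NhatS_eq_card]
  rw [hfe]
  have h := measurable_card_filter
    (fun (t : Fin Nn) (ω : Fin Nn → Bool × (Fin n → X × Bool)) => ∀ i, (ω t).2 i = (x1, σ))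
    (fun t => by
      have : {ω : Fin Nn → Bool × (Fin n → X × Bool) | ∀ i, (ω t).2 i = (x1, σ)}
          = ⋂ i : Fin n, {ω : Fin Nn → Bool × (Fin n → X × Bool) | (ω t).2 i = (x1, σ)} := by
        ext ω; simp
      rw [this]
      refine MeasurableSet.iInter fun i => ?_
      have hm : Measurable fun ω : Fin Nn → Bool × (Fin n → X × Bool) => (ω t).2 i :=
        (measurable_pi_apply i).comp (measurable_snd.comp (measurable_pi_apply t))
      exact hm (measurableSet_singleton (x1, σ)))
  convert h using 1
  funext ω
  congr!

lemma measurable_nhatS (σ : Bool) :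
    Measurable fun ω : Fin Nn → Bool × (Fin n → X × Bool) =>
      nhatS x1 (fun t => (ω t).2) σ := by
  classical
  have hfe : (fun ω : Fin Nn → Bool × (Fin n → X × Bool) => nhatS x1 (fun t => (ω t).2) σ)
      = fun ω => (Finset.univ.filter
          fun p : Fin Nn × Fin n => (ω p.1).2 p.2 = (x1, σ)).card := by
    funext ω
    rw [nhatS, ncard_setOf_eq_card_filter]
    congr!
  rw [hfe]
  have h := measurable_card_filter
    (fun (p : Fin Nn × Fin n) (ω : Fin Nn → Bool × (Fin n → X × Bool)) =>
      (ω p.1).2 p.2 = (x1, σ))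
    (fun p => by
      have hm : Measurable fun ω : Fin Nn → Bool × (Fin n → X × Bool) => (ω p.1).2 p.2 :=
        (measurable_pi_apply p.2).comp (measurable_snd.comp (measurable_pi_apply p.1))
      exact hm (measurableSet_singleton (x1, σ)))
  convert h using 1
  funext ω
  congr!

lemma measurable_ntildeS (σ : Bool) :
    Measurable fun ω : Fin Nn → Bool × (Fin n → X × Bool) =>
      ntildeS x1 (fun t => (ω t).2) σ := by
  have : (fun ω : Fin Nn → Bool × (Fin n → X × Bool) => ntildeS x1 (fun t => (ω t).2) σ)
      = fun ω => nhatS x1 (fun t => (ω t).2) σ - n * NhatS x1 (fun t => (ω t).2) σ := rfl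
  rw [this]
  exact measurable_nat_pair (measurable_nhatS x1 σ) (measurable_NhatS x1 σ)
    (fun u v => u - n * v)

lemma measurableSet_evA : MeasurableSet (evA x1 n Nn) :=
  measurableSet_nat_lt (measurable_NhatS x1 false) (measurable_NhatS x1 true)

lemma measurableSet_evB : MeasurableSet (evB x1 n Nn) :=
  measurableSet_nat_lt (measurable_ntildeS x1 false) (measurable_ntildeS x1 true)

lemma measurableSet_evL (a b : ℕ) : MeasurableSet (evL x1 n Nn a b) := by
  have : evL x1 n Nn a b =
      (fun ω : Fin Nn → Bool × (Fin n → X × Bool) => NhatP x1 ω) ⁻¹' {a} ∩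
      (fun ω : Fin Nn → Bool × (Fin n → X × Bool) => NhatQ x1 ω) ⁻¹' {b} := rfl
  rw [this]
  exact ((measurable_NhatP x1) (measurableSet_singleton a)).inter
    ((measurable_NhatQ x1) (measurableSet_singleton b))

end Meas

section Fin

variable {X : Type u} [MeasurableSpace X] [MeasurableSingletonClass X]

lemma isFiniteMeasure_twoPt (x0 x1 : X) (w η : ℝ) : IsFiniteMeasure (twoPt x0 x1 w η) := by
  constructor
  rw [twoPt]
  simp only [Measure.add_apply, Measure.smul_apply, smul_eq_mul, measure_univ, mul_one]
  exact ENNReal.add_lt_top.2 ⟨ENNReal.add_lt_top.2 ⟨ENNReal.ofReal_lt_top, ENNReal.ofReal_lt_top⟩,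
    ENNReal.ofReal_lt_top⟩

lemma isFiniteMeasure_blockJ (x0 x1 : X) (β c1 : ℝ) (n NP NQ : ℕ) (σ : Bool) :
    IsFiniteMeasure (blockJ x0 x1 β c1 n NP NQ σ) := by
  haveI h1 : IsFiniteMeasure (Psrc x0 x1 β c1 n NP σ) := isFiniteMeasure_twoPt x0 x1 _ _
  haveI h2 : IsFiniteMeasure (Qsrc x0 x1 σ) := isFiniteMeasure_twoPt x0 x1 _ _
  haveI h3 : IsFiniteMeasure (Measure.pi fun _ : Fin n => Psrc x0 x1 β c1 n NP σ) :=
    isFiniteMeasure_pi _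
  haveI h4 : IsFiniteMeasure (Measure.pi fun _ : Fin n => Qsrc x0 x1 σ) :=
    isFiniteMeasure_pi _
  constructor
  rw [blockJ]
  simp only [Measure.add_apply, Measure.smul_apply, smul_eq_mul]
  exact ENNReal.add_lt_top.2
    ⟨ENNReal.mul_lt_top ENNReal.ofReal_lt_top (measure_lt_top _ _),
     ENNReal.mul_lt_top ENNReal.ofReal_lt_top (measure_lt_top _ _)⟩

lemma isFiniteMeasure_tgtM (x0 x1 : X) (β c0 : ℝ) (nD : ℕ) (σ : Bool) :
    IsFiniteMeasure (tgtM x0 x1 β c0 nD σ) := by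
  haveI : IsFiniteMeasure (Dtgt x0 x1 β c0 nD σ) := isFiniteMeasure_twoPt x0 x1 _ _
  exact isFiniteMeasure_pi _

lemma isFiniteMeasure_GammaJ (x0 x1 : X) (β c0 c1 : ℝ) (n nD NP NQ : ℕ) (σ : Bool) :
    IsFiniteMeasure (GammaJ x0 x1 β c0 c1 n nD NP NQ σ) := by
  haveI h1 : IsFiniteMeasure (blockJ x0 x1 β c1 n NP NQ σ) := isFiniteMeasure_blockJ _ _ _ _ _ _ _ _
  haveI h2 : IsFiniteMeasure (Measure.pi fun _ : Fin (NP + NQ) => blockJ x0 x1 β c1 n NP NQ σ) :=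
    isFiniteMeasure_pi _
  haveI h3 : IsFiniteMeasure (tgtM x0 x1 β c0 nD σ) := isFiniteMeasure_tgtM _ _ _ _ _ _
  rw [GammaJ]
  infer_instance

end Fin

/-- Proposition: reducing the likelihood-ratio event.
Let `Z ∼ Γ₋` (augmented with the latent mixture-component indicators), `n > 1`,
and suppose (i) `P(N̂₊ > N̂₋ | N̂_P, N̂_Q) 1{E_P ∩ E_Q} ≥ δ₁ 1{E_P ∩ E_Q}` a.s.
(stated on the level sets of the discrete pair `(N̂_P, N̂_Q)`), and
(ii) `P(ñ₊ > ñ₋) ≥ δ₂`.  Then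
`P(N̂₊ ≥ N̂₋ ∧ n̂₊ ≥ n̂₋) ≥ δ₁ (δ₂ - P(E_Pᶜ) - P(E_Qᶜ))`. -/
theorem statement8 {X : Type u} [MeasurableSpace X] [MeasurableSingletonClass X]
    (x0 x1 : X) (hx : x0 ≠ x1)
    (β c0 c1 : ℝ) (n nD NP NQ : ℕ)
    (hβ0 : 0 ≤ β) (hβ1 : β < 1) (hn : 1 < n) (hNP : 1 ≤ NP) (hNQ : 1 ≤ NQ)
    (hc0 : 0 < c0) (hc1 : 0 < c1)
    (δ1 δ2 : ℝ) (hδ1 : 0 < δ1) (hδ2 : 0 < δ2)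
    (EP EQ : Set ((Fin (NP + NQ) → Bool × (Fin n → X × Bool)) × (Fin nD → X × Bool)))
    (hEP : EP = {W |
      (∫ W', (NhatP x1 W'.1 : ℝ) ∂(GammaJ x0 x1 β c0 c1 n nD NP NQ false)) / 2
          ≤ (NhatP x1 W.1 : ℝ) ∧
      (NhatP x1 W.1 : ℝ)
          ≤ 2 * ∫ W', (NhatP x1 W'.1 : ℝ) ∂(GammaJ x0 x1 β c0 c1 n nD NP NQ false)})
    (hEQ : EQ = {W |
      (NhatQ x1 W.1 : ℝ)
          ≤ 2 * ∫ W', (NhatQ x1 W'.1 : ℝ) ∂(GammaJ x0 x1 β c0 c1 n nD NP NQ false)})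
    -- (i): conditionally on each level set of `(N̂_P, N̂_Q)` contained in `E_P ∩ E_Q`
    (hi : ∀ a b : ℕ,
      {W : (Fin (NP + NQ) → Bool × (Fin n → X × Bool)) × (Fin nD → X × Bool) |
          NhatP x1 W.1 = a ∧ NhatQ x1 W.1 = b} ⊆ EP ∩ EQ →
      δ1 * (GammaJ x0 x1 β c0 c1 n nD NP NQ false
          {W | NhatP x1 W.1 = a ∧ NhatQ x1 W.1 = b}).toReal ≤
        (GammaJ x0 x1 β c0 c1 n nD NP NQ false
          ({W | NhatS x1 (fun t => (W.1 t).2) false < NhatS x1 (fun t => (W.1 t).2) true}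
            ∩ {W | NhatP x1 W.1 = a ∧ NhatQ x1 W.1 = b})).toReal)
    -- (ii)
    (hii : δ2 ≤ (GammaJ x0 x1 β c0 c1 n nD NP NQ false
        {W | ntildeS x1 (fun t => (W.1 t).2) false <
             ntildeS x1 (fun t => (W.1 t).2) true}).toReal) :
    δ1 * (δ2 - (GammaJ x0 x1 β c0 c1 n nD NP NQ false EPᶜ).toReal
            - (GammaJ x0 x1 β c0 c1 n nD NP NQ false EQᶜ).toReal) ≤
      (GammaJ x0 x1 β c0 c1 n nD NP NQ false
        {W | NhatS x1 (fun t => (W.1 t).2) false ≤ NhatS x1 (fun t => (W.1 t).2) true ∧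
             nhatS x1 (fun t => (W.1 t).2) false ≤
               nhatS x1 (fun t => (W.1 t).2) true}).toReal := by
  classical
  have hn0 : 0 < n := lt_trans Nat.zero_lt_one hn
  set Γ := GammaJ x0 x1 β c0 c1 n nD NP NQ false with hGdef
  haveI hΓfin : IsFiniteMeasure Γ := isFiniteMeasure_GammaJ x0 x1 β c0 c1 n nD NP NQ false
  haveI hμbfin : IsFiniteMeasure (blockJ x0 x1 β c1 n NP NQ false) :=
    isFiniteMeasure_blockJ x0 x1 β c1 n NP NQ false
  haveI hτfin : IsFiniteMeasure (tgtM x0 x1 β c0 nD false) :=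
    isFiniteMeasure_tgtM x0 x1 β c0 nD false
  haveI hμpfin : IsFiniteMeasure
      (Measure.pi fun _ : Fin (NP + NQ) => blockJ x0 x1 β c1 n NP NQ false) :=
    isFiniteMeasure_pi _
  set μp := Measure.pi (fun _ : Fin (NP + NQ) => blockJ x0 x1 β c1 n NP NQ false) with hμp
  -- fst preimage factorization
  have hfst : ∀ S : Set (Fin (NP + NQ) → Bool × (Fin n → X × Bool)),
      Γ (Prod.fst ⁻¹' S) = μp S * tgtM x0 x1 β c0 nD false Set.univ := by
    intro S
    rw [hGdef, GammaJ, ← Set.prod_univ, Measure.prod_prod, hμp]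
  -- abbreviations for events
  set A := evA x1 n (NP + NQ) with hA
  set B := evB x1 n (NP + NQ) with hB
  set L := evL x1 n (NP + NQ) with hL
  -- independence identity
  have hIndep : ∀ a b : ℕ,
      Γ (Prod.fst ⁻¹' (A ∩ B ∩ L a b)) * Γ (Prod.fst ⁻¹' (L a b)) =
        Γ (Prod.fst ⁻¹' (A ∩ L a b)) * Γ (Prod.fst ⁻¹' (B ∩ L a b)) := by
    intro a b
    rw [hfst, hfst, hfst, hfst]
    have hcore := core_identity x1 hn0 (blockJ x0 x1 β c1 n NP NQ false) a b (Nn := NP + NQ)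
    rw [← hμp] at hcore
    rw [hA, hB, hL]
    calc μp (evA x1 n (NP+NQ) ∩ evB x1 n (NP+NQ) ∩ evL x1 n (NP+NQ) a b) *
          tgtM x0 x1 β c0 nD false Set.univ *
          (μp (evL x1 n (NP+NQ) a b) * tgtM x0 x1 β c0 nD false Set.univ)
        = μp (evA x1 n (NP+NQ) ∩ evB x1 n (NP+NQ) ∩ evL x1 n (NP+NQ) a b) *
            μp (evL x1 n (NP+NQ) a b) *
            (tgtM x0 x1 β c0 nD false Set.univ * tgtM x0 x1 β c0 nD false Set.univ) := by ring
      _ = μp (evA x1 n (NP+NQ) ∩ evL x1 n (NP+NQ) a b) *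
            μp (evB x1 n (NP+NQ) ∩ evL x1 n (NP+NQ) a b) *
            (tgtM x0 x1 β c0 nD false Set.univ * tgtM x0 x1 β c0 nD false Set.univ) := by
          rw [hcore]
      _ = μp (evA x1 n (NP+NQ) ∩ evL x1 n (NP+NQ) a b) * tgtM x0 x1 β c0 nD false Set.univ *
            (μp (evB x1 n (NP+NQ) ∩ evL x1 n (NP+NQ) a b) *
              tgtM x0 x1 β c0 nD false Set.univ) := by ring
  -- measurable preimages
  have hmL : ∀ a b : ℕ, MeasurableSet ((Prod.fst :
      ((Fin (NP + NQ) → Bool × (Fin n → X × Bool)) × (Fin nD → X × Bool)) →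
        (Fin (NP + NQ) → Bool × (Fin n → X × Bool))) ⁻¹' (L a b)) := fun a b =>
    (measurableSet_evL x1 a b).preimage measurable_fst
  have hmBL : ∀ a b : ℕ, MeasurableSet ((Prod.fst :
      ((Fin (NP + NQ) → Bool × (Fin n → X × Bool)) × (Fin nD → X × Bool)) →
        (Fin (NP + NQ) → Bool × (Fin n → X × Bool))) ⁻¹' (B ∩ L a b)) := fun a b =>
    ((measurableSet_evB x1).inter (measurableSet_evL x1 a b)).preimage measurable_fst
  have hmABL : ∀ a b : ℕ, MeasurableSet ((Prod.fst :
      ((Fin (NP + NQ) → Bool × (Fin n → X × Bool)) × (Fin nD → X × Bool)) →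
        (Fin (NP + NQ) → Bool × (Fin n → X × Bool))) ⁻¹' (A ∩ B ∩ L a b)) := fun a b =>
    (((measurableSet_evA x1).inter (measurableSet_evB x1)).inter
      (measurableSet_evL x1 a b)).preimage measurable_fst
  -- the key per-level inequality
  have hkey : ∀ a b : ℕ,
      {W : (Fin (NP + NQ) → Bool × (Fin n → X × Bool)) × (Fin nD → X × Bool) |
        NhatP x1 W.1 = a ∧ NhatQ x1 W.1 = b} ⊆ EP ∩ EQ →
      δ1 * (Γ (Prod.fst ⁻¹' (B ∩ L a b))).toReal ≤
        (Γ (Prod.fst ⁻¹' (A ∩ B ∩ L a b))).toReal := by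
    intro a b hsub
    have hhi := hi a b hsub
    have hset1 : {W : (Fin (NP + NQ) → Bool × (Fin n → X × Bool)) × (Fin nD → X × Bool) |
        NhatP x1 W.1 = a ∧ NhatQ x1 W.1 = b} = Prod.fst ⁻¹' (L a b) := rfl
    have hset2 : ({W : (Fin (NP + NQ) → Bool × (Fin n → X × Bool)) × (Fin nD → X × Bool) |
          NhatS x1 (fun t => (W.1 t).2) false < NhatS x1 (fun t => (W.1 t).2) true} ∩
        {W | NhatP x1 W.1 = a ∧ NhatQ x1 W.1 = b}) = Prod.fst ⁻¹' (A ∩ L a b) := rfl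
    rw [hset2, hset1] at hhi
    have hxy : (Γ (Prod.fst ⁻¹' (A ∩ B ∩ L a b))).toReal * (Γ (Prod.fst ⁻¹' (L a b))).toReal =
        (Γ (Prod.fst ⁻¹' (A ∩ L a b))).toReal * (Γ (Prod.fst ⁻¹' (B ∩ L a b))).toReal := by
      rw [← ENNReal.toReal_mul, ← ENNReal.toReal_mul, hIndep a b]
    by_cases hy : (Γ (Prod.fst ⁻¹' (L a b))).toReal = 0
    · have hv : (Γ (Prod.fst ⁻¹' (B ∩ L a b))).toReal ≤ (Γ (Prod.fst ⁻¹' (L a b))).toReal :=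
        ENNReal.toReal_mono (measure_ne_top _ _)
          (measure_mono (Set.preimage_mono Set.inter_subset_right))
      have hv0 : (Γ (Prod.fst ⁻¹' (B ∩ L a b))).toReal = 0 :=
        le_antisymm (hy ▸ hv) ENNReal.toReal_nonneg
      rw [hv0, mul_zero]
      exact ENNReal.toReal_nonneg
    · have hy' : 0 < (Γ (Prod.fst ⁻¹' (L a b))).toReal :=
        lt_of_le_of_ne ENNReal.toReal_nonneg (Ne.symm hy)
      have hchain : (δ1 * (Γ (Prod.fst ⁻¹' (B ∩ L a b))).toReal) *
            (Γ (Prod.fst ⁻¹' (L a b))).toReal ≤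
          (Γ (Prod.fst ⁻¹' (A ∩ B ∩ L a b))).toReal * (Γ (Prod.fst ⁻¹' (L a b))).toReal := by
        calc (δ1 * (Γ (Prod.fst ⁻¹' (B ∩ L a b))).toReal) * (Γ (Prod.fst ⁻¹' (L a b))).toReal
            = (δ1 * (Γ (Prod.fst ⁻¹' (L a b))).toReal) *
                (Γ (Prod.fst ⁻¹' (B ∩ L a b))).toReal := by ring
          _ ≤ (Γ (Prod.fst ⁻¹' (A ∩ L a b))).toReal *
                (Γ (Prod.fst ⁻¹' (B ∩ L a b))).toReal :=
              mul_le_mul_of_nonneg_right hhi ENNReal.toReal_nonneg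
          _ = (Γ (Prod.fst ⁻¹' (A ∩ B ∩ L a b))).toReal *
                (Γ (Prod.fst ⁻¹' (L a b))).toReal := hxy.symm
      exact le_of_mul_le_mul_right hchain hy'
  -- the good level sets
  set goodF : Finset (ℕ × ℕ) :=
    ((Finset.range (NP + NQ + 1)) ×ˢ (Finset.range (NP + NQ + 1))).filter
      (fun q => {W : (Fin (NP + NQ) → Bool × (Fin n → X × Bool)) × (Fin nD → X × Bool) |
        NhatP x1 W.1 = q.1 ∧ NhatQ x1 W.1 = q.2} ⊆ EP ∩ EQ) with hgoodF
  have hcntP_le : ∀ ω : Fin (NP + NQ) → Bool × (Fin n → X × Bool), NhatP x1 ω ≤ NP + NQ := by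
    intro ω
    have h1 : ({t | (ω t).1 = true ∧ ∃ b, ∀ i, (ω t).2 i = (x1, b)} :
        Set (Fin (NP + NQ))).ncard ≤ (Set.univ : Set (Fin (NP + NQ))).ncard :=
      Set.ncard_le_ncard (Set.subset_univ _) Set.finite_univ
    rw [Set.ncard_univ, Nat.card_eq_fintype_card, Fintype.card_fin] at h1
    exact h1
  have hcntQ_le : ∀ ω : Fin (NP + NQ) → Bool × (Fin n → X × Bool), NhatQ x1 ω ≤ NP + NQ := by
    intro ω
    have h1 : ({t | (ω t).1 = false ∧ ∃ b, ∀ i, (ω t).2 i = (x1, b)} :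
        Set (Fin (NP + NQ))).ncard ≤ (Set.univ : Set (Fin (NP + NQ))).ncard :=
      Set.ncard_le_ncard (Set.subset_univ _) Set.finite_univ
    rw [Set.ncard_univ, Nat.card_eq_fintype_card, Fintype.card_fin] at h1
    exact h1
  have hLpre : ∀ a b : ℕ,
      {W : (Fin (NP + NQ) → Bool × (Fin n → X × Bool)) × (Fin nD → X × Bool) |
        NhatP x1 W.1 = a ∧ NhatQ x1 W.1 = b} = Prod.fst ⁻¹' (L a b) := fun a b => rfl
  have hEunion : EP ∩ EQ = ⋃ q ∈ goodF, Prod.fst ⁻¹' (L q.1 q.2) := by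
    ext W
    constructor
    · intro hW
      refine Set.mem_iUnion₂.2 ⟨(NhatP x1 W.1, NhatQ x1 W.1), ?_, ⟨rfl, rfl⟩⟩
      rw [hgoodF, Finset.mem_filter]
      constructor
      · rw [Finset.mem_product, Finset.mem_range, Finset.mem_range]
        exact ⟨Nat.lt_succ_of_le (hcntP_le _), Nat.lt_succ_of_le (hcntQ_le _)⟩
      · intro W' hW'
        obtain ⟨h1', h2'⟩ := hW'
        constructor
        · rw [hEP]
          rw [hEP] at hW
          have h := hW.1
          rw [Set.mem_setOf_eq] at h ⊢
          rw [h1']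
          exact h
        · rw [hEQ]
          rw [hEQ] at hW
          have h := hW.2
          rw [Set.mem_setOf_eq] at h ⊢
          rw [h2']
          exact h
    · intro hW
      obtain ⟨q, hq, hWq⟩ := Set.mem_iUnion₂.1 hW
      have hsub := (Finset.mem_filter.1 (by rwa [hgoodF] at hq)).2
      exact hsub hWq
  -- disjointness of the level sets
  have hdisj : ∀ S : Set (Fin (NP + NQ) → Bool × (Fin n → X × Bool)),
      (↑goodF : Set (ℕ × ℕ)).PairwiseDisjoint
        (fun q : ℕ × ℕ => (Prod.fst :
          ((Fin (NP + NQ) → Bool × (Fin n → X × Bool)) × (Fin nD → X × Bool)) →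
            (Fin (NP + NQ) → Bool × (Fin n → X × Bool))) ⁻¹' (S ∩ L q.1 q.2)) := by
    intro S q hq q' hq' hne
    refine Set.disjoint_left.2 fun W hW hW' => hne ?_
    have e1 : NhatP x1 W.1 = q.1 ∧ NhatQ x1 W.1 = q.2 := hW.2
    have e2 : NhatP x1 W.1 = q'.1 ∧ NhatQ x1 W.1 = q'.2 := hW'.2
    exact Prod.ext (e1.1.symm.trans e2.1) (e1.2.symm.trans e2.2)
  -- B-sum
  have hBinter : Prod.fst ⁻¹' B ∩ (EP ∩ EQ) =
      ⋃ q ∈ goodF, Prod.fst ⁻¹' (B ∩ L q.1 q.2) := by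
    rw [hEunion, Set.inter_iUnion₂]
    exact Set.iUnion₂_congr fun q _ => (Set.preimage_inter).symm
  have hBsum : Γ (Prod.fst ⁻¹' B ∩ (EP ∩ EQ)) =
      ∑ q ∈ goodF, Γ (Prod.fst ⁻¹' (B ∩ L q.1 q.2)) := by
    rw [hBinter]
    exact measure_biUnion_finset (hdisj B) fun q _ => hmBL q.1 q.2
  -- AB-sum and target inclusion
  have hTincl : (⋃ q ∈ goodF, Prod.fst ⁻¹' (A ∩ B ∩ L q.1 q.2)) ⊆
      {W : (Fin (NP + NQ) → Bool × (Fin n → X × Bool)) × (Fin nD → X × Bool) |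
        NhatS x1 (fun t => (W.1 t).2) false ≤ NhatS x1 (fun t => (W.1 t).2) true ∧
        nhatS x1 (fun t => (W.1 t).2) false ≤ nhatS x1 (fun t => (W.1 t).2) true} := by
    intro W hW
    obtain ⟨q, hq, hWq⟩ := Set.mem_iUnion₂.1 hW
    have hA' : NhatS x1 (fun t => (W.1 t).2) false < NhatS x1 (fun t => (W.1 t).2) true :=
      hWq.1.1
    have hB' : ntildeS x1 (fun t => (W.1 t).2) false < ntildeS x1 (fun t => (W.1 t).2) true :=
      hWq.1.2
    refine ⟨le_of_lt hA', ?_⟩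
    have h1 := ntildeS_add_eq x1 (fun t => (W.1 t).2) false
    have h2 := ntildeS_add_eq x1 (fun t => (W.1 t).2) true
    calc nhatS x1 (fun t => (W.1 t).2) false
        = ntildeS x1 (fun t => (W.1 t).2) false + n * NhatS x1 (fun t => (W.1 t).2) false :=
          h1.symm
      _ ≤ ntildeS x1 (fun t => (W.1 t).2) true + n * NhatS x1 (fun t => (W.1 t).2) true :=
          Nat.add_le_add (le_of_lt hB') (Nat.mul_le_mul_left n (le_of_lt hA'))
      _ = nhatS x1 (fun t => (W.1 t).2) true := h2
  have hABsum : ∑ q ∈ goodF, (Γ (Prod.fst ⁻¹' (A ∩ B ∩ L q.1 q.2))).toReal ≤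
      (Γ {W : (Fin (NP + NQ) → Bool × (Fin n → X × Bool)) × (Fin nD → X × Bool) |
        NhatS x1 (fun t => (W.1 t).2) false ≤ NhatS x1 (fun t => (W.1 t).2) true ∧
        nhatS x1 (fun t => (W.1 t).2) false ≤
          nhatS x1 (fun t => (W.1 t).2) true}).toReal := by
    rw [← ENNReal.toReal_sum (fun q _ => measure_ne_top _ _)]
    rw [← measure_biUnion_finset (hdisj (A ∩ B)) (fun q _ => hmABL q.1 q.2)]
    exact ENNReal.toReal_mono (measure_ne_top _ _) (measure_mono hTincl)
  -- inclusion-exclusion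
  have hBE : (Γ (Prod.fst ⁻¹' B)).toReal ≤
      (Γ (Prod.fst ⁻¹' B ∩ (EP ∩ EQ))).toReal + (Γ EPᶜ).toReal + (Γ EQᶜ).toReal := by
    have hsub : Prod.fst ⁻¹' B ⊆ (Prod.fst ⁻¹' B ∩ (EP ∩ EQ)) ∪ (EPᶜ ∪ EQᶜ) := by
      intro W hW
      by_cases h1 : W ∈ EP
      · by_cases h2 : W ∈ EQ
        · exact Or.inl ⟨hW, h1, h2⟩
        · exact Or.inr (Or.inr h2)
      · exact Or.inr (Or.inl h1)
    have hle : Γ (Prod.fst ⁻¹' B) ≤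
        Γ (Prod.fst ⁻¹' B ∩ (EP ∩ EQ)) + (Γ EPᶜ + Γ EQᶜ) := by
      calc Γ (Prod.fst ⁻¹' B) ≤ Γ ((Prod.fst ⁻¹' B ∩ (EP ∩ EQ)) ∪ (EPᶜ ∪ EQᶜ)) :=
            measure_mono hsub
        _ ≤ Γ (Prod.fst ⁻¹' B ∩ (EP ∩ EQ)) + Γ (EPᶜ ∪ EQᶜ) := measure_union_le _ _
        _ ≤ Γ (Prod.fst ⁻¹' B ∩ (EP ∩ EQ)) + (Γ EPᶜ + Γ EQᶜ) := by
            gcongr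
            exact measure_union_le _ _
    have hfin : Γ (Prod.fst ⁻¹' B ∩ (EP ∩ EQ)) + (Γ EPᶜ + Γ EQᶜ) ≠ ⊤ :=
      ENNReal.add_ne_top.2 ⟨measure_ne_top _ _,
        ENNReal.add_ne_top.2 ⟨measure_ne_top _ _, measure_ne_top _ _⟩⟩
    have := ENNReal.toReal_mono hfin hle
    rw [ENNReal.toReal_add (measure_ne_top _ _)
        (ENNReal.add_ne_top.2 ⟨measure_ne_top _ _, measure_ne_top _ _⟩),
      ENNReal.toReal_add (measure_ne_top _ _) (measure_ne_top _ _)] at this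
    linarith
  -- hii restated
  have hsetB : {W : (Fin (NP + NQ) → Bool × (Fin n → X × Bool)) × (Fin nD → X × Bool) |
      ntildeS x1 (fun t => (W.1 t).2) false < ntildeS x1 (fun t => (W.1 t).2) true}
      = Prod.fst ⁻¹' B := rfl
  rw [hsetB] at hii
  -- main chain
  have hmain : δ2 - (Γ EPᶜ).toReal - (Γ EQᶜ).toReal ≤
      (Γ (Prod.fst ⁻¹' B ∩ (EP ∩ EQ))).toReal := by linarith
  have hstep : δ1 * (Γ (Prod.fst ⁻¹' B ∩ (EP ∩ EQ))).toReal ≤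
      (Γ {W : (Fin (NP + NQ) → Bool × (Fin n → X × Bool)) × (Fin nD → X × Bool) |
        NhatS x1 (fun t => (W.1 t).2) false ≤ NhatS x1 (fun t => (W.1 t).2) true ∧
        nhatS x1 (fun t => (W.1 t).2) false ≤
          nhatS x1 (fun t => (W.1 t).2) true}).toReal := by
    rw [hBsum, ENNReal.toReal_sum (fun q _ => measure_ne_top _ _), Finset.mul_sum]
    refine le_trans (Finset.sum_le_sum fun q hq => ?_) hABsum
    have hq2 : {W : (Fin (NP + NQ) → Bool × (Fin n → X × Bool)) × (Fin nD → X × Bool) |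
        NhatP x1 W.1 = q.1 ∧ NhatQ x1 W.1 = q.2} ⊆ EP ∩ EQ := by
      rw [hgoodF] at hq
      exact (Finset.mem_filter.1 hq).2
    exact hkey q.1 q.2 hq2
  calc δ1 * (δ2 - (Γ EPᶜ).toReal - (Γ EQᶜ).toReal)
      ≤ δ1 * (Γ (Prod.fst ⁻¹' B ∩ (EP ∩ EQ))).toReal :=
        mul_le_mul_of_nonneg_left hmain (le_of_lt hδ1)
    _ ≤ _ := hstep


end Paper
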